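/- The optimal values of the discrete-time dual SOS approximations converge monotonically from above to the optimal value of the discrete-time dual LP: d_{k+1}* ≤ d_k*, d_k* ≥ d* for all k, and lim_{k→∞} d_k* = d*. -/

import Mathlib

open MeasureTheory

/-- A polynomial is a sum of squares. -/
def IsSOS {σ : Type*} (p : MvPolynomial σ ℝ) : Prop :=
  ∃ (k : ℕ) (q : Fin k → MvPolynomial σ ℝ), p = ∑ i, (q i) ^ 2

/-- The basic closed semialgebraic set `{x : ∀ i, gᵢ(x) ≥ 0}`. -/
def semiSet {n nX : ℕ} (g : Fin nX → MvPolynomial (Fin n) ℝ) : Set (Fin n → ℝ) :=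
  {x | ∀ i, 0 ≤ MvPolynomial.eval x (g i)}

/-- Evaluation of the polynomial map `f` with components `F i ∈ ℝ[x, u]`. -/
noncomputable def polyMapEval {n m : ℕ} (F : Fin n → MvPolynomial (Fin n ⊕ Fin m) ℝ)
    (x : Fin n → ℝ) (u : Fin m → ℝ) : Fin n → ℝ :=
  fun i => MvPolynomial.eval (Sum.elim x u) (F i)

/-- Feasibility of a pair of continuous functions `(v, w)` for the discrete-time dual LP. -/
def DualFeasD {n m nX nU : ℕ} (g : Fin nX → MvPolynomial (Fin n) ℝ)
    (h : Fin nU → MvPolynomial (Fin m) ℝ)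
    (F : Fin n → MvPolynomial (Fin n ⊕ Fin m) ℝ)
    (α : ℝ) (v w : (Fin n → ℝ) → ℝ) : Prop :=
  Continuous v ∧ Continuous w ∧
  (∀ x ∈ semiSet g, ∀ u ∈ semiSet h, α * v (polyMapEval F x u) ≤ v x) ∧
  (∀ x ∈ semiSet g, v x + 1 ≤ w x) ∧
  (∀ x ∈ semiSet g, 0 ≤ w x)

/-- The optimal value `d*` of the discrete-time dual LP. -/
noncomputable def dualValD {n m nX nU : ℕ} (g : Fin nX → MvPolynomial (Fin n) ℝ)
    (h : Fin nU → MvPolynomial (Fin m) ℝ)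
    (F : Fin n → MvPolynomial (Fin n ⊕ Fin m) ℝ) (α : ℝ) : ℝ :=
  sInf {r : ℝ | ∃ v w, DualFeasD g h F α v w ∧ r = ∫ x in semiSet g, w x ∂volume}

/-- `k`-feasibility of a pair of polynomials `(v, w)` for the `k`-th discrete-time
dual SOS (Putinar) approximation. -/
def KFeasD {n m nX nU : ℕ} (g : Fin nX → MvPolynomial (Fin n) ℝ)
    (h : Fin nU → MvPolynomial (Fin m) ℝ)
    (F : Fin n → MvPolynomial (Fin n ⊕ Fin m) ℝ)
    (α : ℝ) (k : ℕ) (v w : MvPolynomial (Fin n) ℝ) : Prop :=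
  v.totalDegree ≤ 2 * k ∧ w.totalDegree ≤ 2 * k ∧
  ∃ (q0 : MvPolynomial (Fin n ⊕ Fin m) ℝ) (q : Fin nX → MvPolynomial (Fin n ⊕ Fin m) ℝ)
    (r : Fin nU → MvPolynomial (Fin n ⊕ Fin m) ℝ)
    (p0 : MvPolynomial (Fin n) ℝ) (p : Fin nX → MvPolynomial (Fin n) ℝ)
    (s0 : MvPolynomial (Fin n) ℝ) (s : Fin nX → MvPolynomial (Fin n) ℝ),
    IsSOS q0 ∧ (∀ i, IsSOS (q i)) ∧ (∀ j, IsSOS (r j)) ∧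
    IsSOS p0 ∧ (∀ i, IsSOS (p i)) ∧ IsSOS s0 ∧ (∀ i, IsSOS (s i)) ∧
    q0.totalDegree ≤ 2 * k * max 1 (Finset.univ.sup fun i => (F i).totalDegree) ∧
    (∀ i, (q i * MvPolynomial.rename Sum.inl (g i)).totalDegree
      ≤ 2 * k * max 1 (Finset.univ.sup fun i => (F i).totalDegree)) ∧
    (∀ j, (r j * MvPolynomial.rename Sum.inr (h j)).totalDegree
      ≤ 2 * k * max 1 (Finset.univ.sup fun i => (F i).totalDegree)) ∧
    p0.totalDegree ≤ 2 * k ∧ (∀ i, (p i * g i).totalDegree ≤ 2 * k) ∧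
    s0.totalDegree ≤ 2 * k ∧ (∀ i, (s i * g i).totalDegree ≤ 2 * k) ∧
    MvPolynomial.rename Sum.inl v - MvPolynomial.C α * MvPolynomial.aeval F v
      = q0 + ∑ i, q i * MvPolynomial.rename Sum.inl (g i)
          + ∑ j, r j * MvPolynomial.rename Sum.inr (h j) ∧
    w - v - 1 = p0 + ∑ i, p i * g i ∧
    w = s0 + ∑ i, s i * g i

/-- The optimal value `d_k*` of the `k`-th discrete-time dual SOS approximation. -/
noncomputable def sosValD {n m nX nU : ℕ} (g : Fin nX → MvPolynomial (Fin n) ℝ)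
    (h : Fin nU → MvPolynomial (Fin m) ℝ)
    (F : Fin n → MvPolynomial (Fin n ⊕ Fin m) ℝ) (α : ℝ) (k : ℕ) : ℝ :=
  sInf {r : ℝ | ∃ v w, KFeasD g h F α k v w ∧
    r = ∫ x in semiSet g, MvPolynomial.eval x w ∂volume}

namespace PutinarAux

open MvPolynomial

variable {τ : Type*}

lemma isSOS_zero : IsSOS (0 : MvPolynomial τ ℝ) := ⟨0, ![], by simp⟩

lemma isSOS_sq (f : MvPolynomial τ ℝ) : IsSOS (f ^ 2) := ⟨1, ![f], by simp⟩

lemma isSOS_one : IsSOS (1 : MvPolynomial τ ℝ) := by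
  simpa using isSOS_sq (1 : MvPolynomial τ ℝ)

lemma isSOS_add {p q : MvPolynomial τ ℝ} (hp : IsSOS p) (hq : IsSOS q) : IsSOS (p + q) := by
  obtain ⟨k1, f1, rfl⟩ := hp
  obtain ⟨k2, f2, rfl⟩ := hq
  refine ⟨k1 + k2, Fin.append f1 f2, ?_⟩
  rw [Fin.sum_univ_add]
  simp [Fin.append_left, Fin.append_right]

lemma isSOS_const {c : ℝ} (hc : 0 ≤ c) : IsSOS (C c : MvPolynomial τ ℝ) := by
  have h : (C c : MvPolynomial τ ℝ) = (C (Real.sqrt c)) ^ 2 := by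
    rw [← C_pow, sq, Real.mul_self_sqrt hc]
  rw [h]; exact isSOS_sq _

lemma isSOS_sq_mul (f : MvPolynomial τ ℝ) {p : MvPolynomial τ ℝ} (hp : IsSOS p) :
    IsSOS (f ^ 2 * p) := by
  obtain ⟨k, q, rfl⟩ := hp
  refine ⟨k, fun i => f * q i, ?_⟩
  rw [Finset.mul_sum]
  congr 1; ext i; ring

lemma isSOS_sum {ι : Type*} (s : Finset ι) (f : ι → MvPolynomial τ ℝ)
    (h : ∀ i ∈ s, IsSOS (f i)) : IsSOS (∑ i ∈ s, f i) := by
  classical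
  induction s using Finset.induction_on with
  | empty => simpa using isSOS_zero
  | insert _ _ hni ih =>
    rw [Finset.sum_insert hni]
    exact isSOS_add (h _ (Finset.mem_insert_self _ _))
      (ih fun i hi => h i (Finset.mem_insert_of_mem hi))

lemma isSOS_smul {c : ℝ} (hc : 0 ≤ c) {p : MvPolynomial τ ℝ} (hp : IsSOS p) :
    IsSOS (c • p) := by
  have : c • p = (C (Real.sqrt c)) ^ 2 * p := by
    rw [← C_pow, sq, Real.mul_self_sqrt hc, smul_eq_C_mul]
  rw [this]
  exact isSOS_sq_mul _ hp

lemma isSOS_eval_nonneg {p : MvPolynomial τ ℝ} (hp : IsSOS p) (x : τ → ℝ) :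
    0 ≤ eval x p := by
  obtain ⟨k, q, rfl⟩ := hp
  rw [map_sum]
  exact Finset.sum_nonneg fun i _ => by
    rw [map_pow]; positivity

/-- A quadratic module (as a subset of the polynomial ring). -/
structure IsQM (P : Set (MvPolynomial τ ℝ)) : Prop where
  one_mem : (1 : MvPolynomial τ ℝ) ∈ P
  add_mem : ∀ {x y}, x ∈ P → y ∈ P → x + y ∈ P
  sq_mul_mem : ∀ (f : MvPolynomial τ ℝ) {x}, x ∈ P → f ^ 2 * x ∈ P

namespace IsQM

variable {P : Set (MvPolynomial τ ℝ)} (hP : IsQM P)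

include hP

lemma zero_mem : (0 : MvPolynomial τ ℝ) ∈ P := by
  simpa using hP.sq_mul_mem 0 hP.one_mem

lemma sum_mem {ι : Type*} {s : Finset ι} {f : ι → MvPolynomial τ ℝ}
    (h : ∀ i ∈ s, f i ∈ P) : (∑ i ∈ s, f i) ∈ P := by
  classical
  induction s using Finset.induction_on with
  | empty => simpa using hP.zero_mem
  | insert _ _ hni ih =>
    rw [Finset.sum_insert hni]
    exact hP.add_mem (h _ (Finset.mem_insert_self _ _))
      (ih fun i hi => h i (Finset.mem_insert_of_mem hi))

lemma sos_mul_mem {s x : MvPolynomial τ ℝ} (hs : IsSOS s) (hx : x ∈ P) : s * x ∈ P := by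
  obtain ⟨k, q, rfl⟩ := hs
  rw [Finset.sum_mul]
  exact hP.sum_mem fun i _ => hP.sq_mul_mem _ hx

lemma sos_mem {s : MvPolynomial τ ℝ} (hs : IsSOS s) : s ∈ P := by
  simpa using hP.sos_mul_mem hs hP.one_mem

lemma smul_mem {c : ℝ} (hc : 0 ≤ c) {x : MvPolynomial τ ℝ} (hx : x ∈ P) : c • x ∈ P := by
  have : c • x = (C (Real.sqrt c)) ^ 2 * x := by
    rw [← C_pow, sq, Real.mul_self_sqrt hc, smul_eq_C_mul]
  rw [this]; exact hP.sq_mul_mem _ hx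

lemma const_mem {c : ℝ} (hc : 0 ≤ c) : (C c : MvPolynomial τ ℝ) ∈ P := by
  have : (C c : MvPolynomial τ ℝ) = c • 1 := by simp [smul_eq_C_mul]
  rw [this]; exact hP.smul_mem hc hP.one_mem

lemma sq_mem (f : MvPolynomial τ ℝ) : f ^ 2 ∈ P := by
  simpa using hP.sq_mul_mem f hP.one_mem

/-- From `k ± a ∈ P` deduce `k² − a² ∈ P`. -/
lemma sq_diff_mem {k : ℝ} (hk : 0 < k) {a : MvPolynomial τ ℝ}
    (h1 : C k - a ∈ P) (h2 : C k + a ∈ P) : C (k ^ 2) - a ^ 2 ∈ P := by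
  have expand : (C k + a) ^ 2 * (C k - a) + (C k - a) ^ 2 * (C k + a)
      = (2 * k) • (C (k ^ 2) - a ^ 2) := by
    rw [smul_eq_C_mul, map_mul, map_ofNat, map_pow]
    ring
  have key : C (k ^ 2) - a ^ 2
      = (1 / (2 * k)) • ((C k + a) ^ 2 * (C k - a) + (C k - a) ^ 2 * (C k + a)) := by
    rw [expand, smul_smul, show (1 / (2 * k)) * (2 * k) = 1 from by field_simp, one_smul]
  rw [key]
  exact hP.smul_mem (by positivity)
    (hP.add_mem (hP.sq_mul_mem _ h1) (hP.sq_mul_mem _ h2))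

/-- From `c² − w² ∈ P` (with `c > 0`) deduce `c + w ∈ P`. -/
lemma recover_mem {c : ℝ} (hc : 0 < c) {w : MvPolynomial τ ℝ}
    (h : C (c ^ 2) - w ^ 2 ∈ P) : C c + w ∈ P := by
  have expand : (C c + w) ^ 2 + (C (c ^ 2) - w ^ 2) = (2 * c) • (C c + w) := by
    rw [smul_eq_C_mul, map_mul, map_ofNat, map_pow]
    ring
  have key : C c + w = (1 / (2 * c)) • ((C c + w) ^ 2 + (C (c ^ 2) - w ^ 2)) := by
    rw [expand, smul_smul, show (1 / (2 * c)) * (2 * c) = 1 from by field_simp, one_smul]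
  rw [key]
  exact hP.smul_mem (by positivity) (hP.add_mem (hP.sq_mem _) h)

lemma enlarge_const {k k' : ℝ} (hk : k ≤ k') {a : MvPolynomial τ ℝ}
    (h : C k - a ∈ P) : C k' - a ∈ P := by
  have : C k' - a = C (k' - k) + (C k - a) := by rw [map_sub]; ring
  rw [this]
  exact hP.add_mem (hP.const_mem (by linarith)) h

end IsQM

/-- Membership in the quadratic module generated by the family `G`. -/
def InQM {ι : Type*} [Fintype ι] (G : ι → MvPolynomial τ ℝ) (p : MvPolynomial τ ℝ) : Prop :=
  ∃ (s0 : MvPolynomial τ ℝ) (c : ι → MvPolynomial τ ℝ),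
    IsSOS s0 ∧ (∀ l, IsSOS (c l)) ∧ p = s0 + ∑ l, c l * G l

lemma isQM_inQM {ι : Type*} [Fintype ι] (G : ι → MvPolynomial τ ℝ) :
    IsQM {p | InQM G p} := by
  constructor
  · exact ⟨1, fun _ => 0, isSOS_one, fun _ => isSOS_zero, by simp⟩
  · rintro x y ⟨s0, c, hs0, hc, rfl⟩ ⟨t0, d, ht0, hd, rfl⟩
    refine ⟨s0 + t0, fun l => c l + d l, isSOS_add hs0 ht0,
      fun l => isSOS_add (hc l) (hd l), ?_⟩
    simp only []
    rw [show (∑ l, (c l + d l) * G l) = (∑ l, c l * G l) + ∑ l, d l * G l from by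
      rw [← Finset.sum_add_distrib]
      exact Finset.sum_congr rfl fun l _ => by ring]
    ring
  · rintro f x ⟨s0, c, hs0, hc, rfl⟩
    refine ⟨f ^ 2 * s0, fun l => f ^ 2 * c l, isSOS_sq_mul _ hs0,
      fun l => isSOS_sq_mul _ (hc l), ?_⟩
    rw [mul_add, Finset.mul_sum]
    congr 1
    ext l
    ring

lemma gen_mem_inQM {ι : Type*} [Fintype ι] [DecidableEq ι] (G : ι → MvPolynomial τ ℝ)
    (l : ι) : InQM G (G l) := by
  refine ⟨0, fun l' => if l' = l then 1 else 0, isSOS_zero, ?_, ?_⟩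
  · intro l'
    dsimp only
    split
    · exact isSOS_one
    · exact isSOS_zero
  · simp [ite_mul, Finset.sum_ite_eq']

lemma inQM_eval_nonneg {ι : Type*} [Fintype ι] {G : ι → MvPolynomial τ ℝ}
    {p : MvPolynomial τ ℝ} (hp : InQM G p) {x : τ → ℝ} (hx : ∀ l, 0 ≤ eval x (G l)) :
    0 ≤ eval x p := by
  obtain ⟨s0, c, hs0, hc, rfl⟩ := hp
  rw [map_add, map_sum]
  have h1 : 0 ≤ eval x s0 := isSOS_eval_nonneg hs0 x
  have h2 : ∀ l : ι, 0 ≤ eval x (c l * G l) := fun l => by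
    rw [map_mul]; exact mul_nonneg (isSOS_eval_nonneg (hc l) x) (hx l)
  exact add_nonneg h1 (Finset.sum_nonneg fun l _ => h2 l)

end PutinarAux
namespace PutinarAux

open MvPolynomial

variable {τ : Type*}

/-- Archimedean property of a quadratic module. -/
def IsArch (P : Set (MvPolynomial τ ℝ)) : Prop :=
  ∀ a : MvPolynomial τ ℝ, ∃ k : ℝ, 0 < k ∧ C k - a ∈ P

/-- `a` is bounded with respect to `P`. -/
def Bnd (P : Set (MvPolynomial τ ℝ)) (a : MvPolynomial τ ℝ) : Prop :=
  ∃ k : ℝ, 0 < k ∧ C k - a ∈ P ∧ C k + a ∈ P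

namespace IsQM

variable {P : Set (MvPolynomial τ ℝ)} (hP : IsQM P)

lemma bnd_neg {a : MvPolynomial τ ℝ} (h : Bnd P a) : Bnd P (-a) := by
  obtain ⟨k, hk, h1, h2⟩ := h
  exact ⟨k, hk, by simpa [sub_neg_eq_add] using h2, by simpa [sub_eq_add_neg] using h1⟩

include hP

lemma bnd_const (r : ℝ) : Bnd P (C r) := by
  refine ⟨|r| + 1, by positivity, ?_, ?_⟩
  · rw [← map_sub]; exact hP.const_mem (by cases abs_cases r <;> linarith)
  · rw [← map_add]; exact hP.const_mem (by cases abs_cases r <;> linarith)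

lemma bnd_add {a b : MvPolynomial τ ℝ} (ha : Bnd P a) (hb : Bnd P b) : Bnd P (a + b) := by
  obtain ⟨k1, hk1, h11, h12⟩ := ha
  obtain ⟨k2, hk2, h21, h22⟩ := hb
  refine ⟨k1 + k2, by positivity, ?_, ?_⟩
  · have := hP.add_mem h11 h21
    rw [show C k1 - a + (C k2 - b) = C (k1 + k2) - (a + b) from by rw [map_add]; ring] at this
    exact this
  · have := hP.add_mem h12 h22
    rw [show C k1 + a + (C k2 + b) = C (k1 + k2) + (a + b) from by rw [map_add]; ring] at this
    exact this

lemma bnd_smul (c : ℝ) {a : MvPolynomial τ ℝ} (ha : Bnd P a) : Bnd P (c • a) := by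
  rcases le_or_gt 0 c with hc | hc
  · obtain ⟨k, hk, h1, h2⟩ := ha
    refine ⟨c * k + 1, by positivity, ?_, ?_⟩
    · have := hP.add_mem (hP.smul_mem hc h1) (hP.const_mem (zero_le_one (α := ℝ)))
      rw [show c • (C k - a) + C (1:ℝ) = C (c * k + 1) - c • a from by
        rw [map_add, map_mul, C_1, smul_eq_C_mul, smul_eq_C_mul]; ring] at this
      exact this
    · have := hP.add_mem (hP.smul_mem hc h2) (hP.const_mem (zero_le_one (α := ℝ)))
      rw [show c • (C k + a) + C (1:ℝ) = C (c * k + 1) + c • a from by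
        rw [map_add, map_mul, C_1, smul_eq_C_mul, smul_eq_C_mul]; ring] at this
      exact this
  · obtain ⟨k, hk, h1, h2⟩ := ha
    have hc' : (0:ℝ) ≤ -c := by linarith
    refine ⟨(-c) * k + 1, by nlinarith, ?_, ?_⟩
    · have := hP.add_mem (hP.smul_mem hc' h2) (hP.const_mem (zero_le_one (α := ℝ)))
      rw [show (-c) • (C k + a) + C (1:ℝ) = C ((-c) * k + 1) - c • a from by
        rw [map_add, map_mul, C_1, smul_eq_C_mul, smul_eq_C_mul, map_neg]; ring] at this
      exact this
    · have := hP.add_mem (hP.smul_mem hc' h1) (hP.const_mem (zero_le_one (α := ℝ)))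
      rw [show (-c) • (C k - a) + C (1:ℝ) = C ((-c) * k + 1) + c • a from by
        rw [map_add, map_mul, C_1, smul_eq_C_mul, smul_eq_C_mul, map_neg]; ring] at this
      exact this

lemma bnd_sq {a : MvPolynomial τ ℝ} (ha : Bnd P a) : Bnd P (a ^ 2) := by
  obtain ⟨k, hk, h1, h2⟩ := ha
  refine ⟨k ^ 2, by positivity, hP.sq_diff_mem hk h1 h2, ?_⟩
  have := hP.add_mem (hP.const_mem (by positivity : (0:ℝ) ≤ k ^ 2)) (hP.sq_mem a)
  exact this

lemma bnd_of_sq_bnd {a : MvPolynomial τ ℝ} {K : ℝ} (h : C K - a ^ 2 ∈ P) : Bnd P a := by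
  have key : ∀ b : MvPolynomial τ ℝ, (b - 1) ^ 2 + (C K - b ^ 2) = C (K + 1) - 2 * b := by
    intro b; rw [map_add, C_1]; ring
  have h2C : (C (1/2 : ℝ) : MvPolynomial τ ℝ) * 2 = 1 := by
    rw [show (2 : MvPolynomial τ ℝ) = C (2:ℝ) from (map_ofNat C 2).symm, ← map_mul]
    norm_num
  have hhalf : ∀ b : MvPolynomial τ ℝ, (1/2 : ℝ) • (C (K + 1) - 2 * b)
      = C ((K + 1)/2) - b := by
    intro b
    rw [smul_eq_C_mul, show ((K+1)/2 : ℝ) = (1/2) * (K+1) from by ring, map_mul]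
    linear_combination (-b) * h2C
  have mem : ∀ b : MvPolynomial τ ℝ, b ^ 2 = a ^ 2 → C ((K + 1)/2) - b ∈ P := by
    intro b hb
    have h0 : (b - 1) ^ 2 + (C K - b ^ 2) ∈ P := by
      refine hP.add_mem (hP.sq_mem _) ?_
      rw [hb]; exact h
    rw [key b] at h0
    have := hP.smul_mem (by norm_num : (0:ℝ) ≤ 1/2) h0
    rw [hhalf b] at this
    exact this
  have hpos := mem a rfl
  have hneg := mem (-a) (by ring)
  refine ⟨max ((K+1)/2) 1, lt_of_lt_of_le one_pos (le_max_right _ _), ?_, ?_⟩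
  · exact hP.enlarge_const (le_max_left _ _) hpos
  · have := hP.enlarge_const (k' := max ((K+1)/2) 1) (le_max_left _ _) hneg
    rw [sub_neg_eq_add] at this
    exact this

lemma bnd_mul {a b : MvPolynomial τ ℝ} (ha : Bnd P a) (hb : Bnd P b) : Bnd P (a * b) := by
  have h1 : Bnd P ((a + b) ^ 2) := hP.bnd_sq (hP.bnd_add ha hb)
  have h2 : Bnd P (-((a - b) ^ 2)) := by
    apply bnd_neg
    refine hP.bnd_sq ?_
    rw [sub_eq_add_neg]
    exact hP.bnd_add ha (bnd_neg hb)
  have h3 : Bnd P ((1/4 : ℝ) • ((a + b) ^ 2 + -((a - b) ^ 2))) :=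
    hP.bnd_smul _ (hP.bnd_add h1 h2)
  have h4C : (C (1/4 : ℝ) : MvPolynomial τ ℝ) * 4 = 1 := by
    rw [show (4 : MvPolynomial τ ℝ) = C (4:ℝ) from (map_ofNat C 4).symm, ← map_mul]
    norm_num
  have key : (1/4 : ℝ) • ((a + b) ^ 2 + -((a - b) ^ 2)) = a * b := by
    rw [smul_eq_C_mul]
    linear_combination (a * b) * h4C
  rwa [key] at h3

lemma bnd_all [Fintype τ] [DecidableEq τ] {R : ℝ} (hball : C R - ∑ i : τ, X i ^ 2 ∈ P)
    (a : MvPolynomial τ ℝ) : Bnd P a := by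
  have hX : ∀ i : τ, Bnd P (X i) := by
    intro i
    apply hP.bnd_of_sq_bnd (K := R)
    have : (C R - X i ^ 2 : MvPolynomial τ ℝ)
        = (C R - ∑ j : τ, X j ^ 2) + ∑ j ∈ Finset.univ.erase i, X j ^ 2 := by
      rw [show (∑ j : τ, (X j : MvPolynomial τ ℝ) ^ 2)
          = X i ^ 2 + ∑ j ∈ Finset.univ.erase i, X j ^ 2 from
        (Finset.add_sum_erase _ _ (Finset.mem_univ i)).symm]
      ring
    rw [this]
    exact hP.add_mem hball (hP.sum_mem fun j _ => hP.sq_mem _)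
  induction a using MvPolynomial.induction_on with
  | C r => exact hP.bnd_const r
  | add p q hp hq => exact hP.bnd_add hp hq
  | mul_X p i hp => exact hP.bnd_mul hp (hX i)

lemma isArch_of_ball [Fintype τ] [DecidableEq τ] {R : ℝ} (hball : C R - ∑ i : τ, X i ^ 2 ∈ P) :
    IsArch P := by
  intro a
  obtain ⟨k, hk, h1, _⟩ := hP.bnd_all hball a
  exact ⟨k, hk, h1⟩

omit hP in
lemma IsArch.mono {P Q : Set (MvPolynomial τ ℝ)} (h : IsArch P) (hPQ : P ⊆ Q) : IsArch Q :=
  fun a => let ⟨k, hk, hm⟩ := h a; ⟨k, hk, hPQ hm⟩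

end IsQM

end PutinarAux
namespace PutinarAux

open MvPolynomial

variable {τ : Type*}

/-- Existence of a maximal proper quadratic module extending a proper one (Zorn). -/
lemma exists_maximal_proper {T : Set (MvPolynomial τ ℝ)} (hT : IsQM T)
    (hprop : (-1 : MvPolynomial τ ℝ) ∉ T) :
    ∃ P, T ⊆ P ∧ IsQM P ∧ (-1 : MvPolynomial τ ℝ) ∉ P ∧
      ∀ Q, IsQM Q → (-1 : MvPolynomial τ ℝ) ∉ Q → P ⊆ Q → Q = P := by
  set S : Set (Set (MvPolynomial τ ℝ)) :=
    {Q | IsQM Q ∧ (-1 : MvPolynomial τ ℝ) ∉ Q ∧ T ⊆ Q} with hS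
  have hchain : ∀ c ⊆ S, IsChain (fun x1 x2 => x1 ⊆ x2) c → c.Nonempty →
      ∃ ub ∈ S, ∀ s ∈ c, s ⊆ ub := by
    intro c hcS hchain ⟨Q0, hQ0⟩
    refine ⟨⋃₀ c, ⟨?_, ?_, ?_⟩, fun s hs => Set.subset_sUnion_of_mem hs⟩
    · constructor
      · exact Set.mem_sUnion.2 ⟨Q0, hQ0, (hcS hQ0).1.one_mem⟩
      · rintro x y ⟨Q1, hQ1, hx⟩ ⟨Q2, hQ2, hy⟩
        rcases hchain.total hQ1 hQ2 with hle | hle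
        · exact Set.mem_sUnion.2 ⟨Q2, hQ2, (hcS hQ2).1.add_mem (hle hx) hy⟩
        · exact Set.mem_sUnion.2 ⟨Q1, hQ1, (hcS hQ1).1.add_mem hx (hle hy)⟩
      · rintro f x ⟨Q1, hQ1, hx⟩
        exact Set.mem_sUnion.2 ⟨Q1, hQ1, (hcS hQ1).1.sq_mul_mem f hx⟩
    · rintro ⟨Q1, hQ1, hx⟩
      exact (hcS hQ1).2.1 hx
    · exact (hcS hQ0).2.2.trans (Set.subset_sUnion_of_mem hQ0)
  obtain ⟨P, hTP, hmax⟩ := zorn_subset_nonempty S hchain T ⟨hT, hprop, subset_rfl⟩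
  obtain ⟨hPQM, hPprop, hTP'⟩ := hmax.prop
  refine ⟨P, hTP', hPQM, hPprop, fun Q hQ hQprop hPQ => ?_⟩
  exact subset_antisymm (hmax.le_of_ge ⟨hQ, hQprop, hTP'.trans hPQ⟩ hPQ) hPQ

section MaximalProper

variable {P : Set (MvPolynomial τ ℝ)} (hP : IsQM P)
  (hprop : (-1 : MvPolynomial τ ℝ) ∉ P)
  (hmax : ∀ Q, IsQM Q → (-1 : MvPolynomial τ ℝ) ∉ Q → P ⊆ Q → Q = P)
  (harch : IsArch P)

include hP

/-- The quadratic module generated by `P` and `a`. -/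
lemma isQM_ext (a : MvPolynomial τ ℝ) :
    IsQM {x | ∃ t ∈ P, ∃ s, IsSOS s ∧ x = t + s * a} := by
  constructor
  · exact ⟨1, hP.one_mem, 0, isSOS_zero, by ring⟩
  · rintro x y ⟨t1, ht1, s1, hs1, rfl⟩ ⟨t2, ht2, s2, hs2, rfl⟩
    exact ⟨t1 + t2, hP.add_mem ht1 ht2, s1 + s2, isSOS_add hs1 hs2, by ring⟩
  · rintro f x ⟨t, ht, s, hs, rfl⟩
    exact ⟨f ^ 2 * t, hP.sq_mul_mem f ht, f ^ 2 * s, isSOS_sq_mul f hs, by ring⟩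

include hprop hmax in
lemma neg_one_eq_of_not_mem {a : MvPolynomial τ ℝ} (ha : a ∉ P) :
    ∃ t ∈ P, ∃ s, IsSOS s ∧ (-1 : MvPolynomial τ ℝ) = t + s * a := by
  by_contra hne
  push_neg at hne
  have hQ : IsQM {x | ∃ t ∈ P, ∃ s, IsSOS s ∧ x = t + s * a} := isQM_ext hP a
  have hQprop : (-1 : MvPolynomial τ ℝ) ∉ {x | ∃ t ∈ P, ∃ s, IsSOS s ∧ x = t + s * a} := by
    rintro ⟨t, ht, s, hs, heq⟩
    exact hne t ht s hs heq
  have hPQ : P ⊆ {x | ∃ t ∈ P, ∃ s, IsSOS s ∧ x = t + s * a} :=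
    fun x hx => ⟨x, hx, 0, isSOS_zero, by ring⟩
  have := hmax _ hQ hQprop hPQ
  apply ha
  rw [← this]
  exact ⟨0, hP.zero_mem, 1, isSOS_one, by ring⟩

/-- If `x` and `-x` both lie in `P`, then `y * x` and `-(y * x)` lie in `P`. -/
lemma supp_mul {x : MvPolynomial τ ℝ} (hx : x ∈ P) (hx' : -x ∈ P)
    (y : MvPolynomial τ ℝ) : y * x ∈ P ∧ -(y * x) ∈ P := by
  have h4C : (C (1/4 : ℝ) : MvPolynomial τ ℝ) * 4 = 1 := by
    rw [show (4 : MvPolynomial τ ℝ) = C (4:ℝ) from (map_ofNat C 4).symm, ← map_mul]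
    norm_num
  have hsq : (C (1/2 : ℝ) : MvPolynomial τ ℝ) ^ 2 = C (1/4 : ℝ) := by
    rw [sq, ← map_mul]; norm_num
  have key : ∀ z : MvPolynomial τ ℝ,
      (C (1/2 : ℝ) * (z + 1)) ^ 2 * x + (C (1/2 : ℝ) * (z - 1)) ^ 2 * (-x) = z * x := by
    intro z
    have expand : (C (1/2 : ℝ) * (z + 1)) ^ 2 * x + (C (1/2 : ℝ) * (z - 1)) ^ 2 * (-x)
        = C (1/4 : ℝ) * (4 * (z * x)) := by
      rw [mul_pow, mul_pow, hsq]; ring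
    rw [expand]
    linear_combination (z * x) * h4C
  constructor
  · have := hP.add_mem (hP.sq_mul_mem (C (1/2 : ℝ) * (y + 1)) hx)
      (hP.sq_mul_mem (C (1/2 : ℝ) * (y - 1)) hx')
    rwa [key y] at this
  · have := hP.add_mem (hP.sq_mul_mem (C (1/2 : ℝ) * ((-y) + 1)) hx)
      (hP.sq_mul_mem (C (1/2 : ℝ) * ((-y) - 1)) hx')
    rw [key (-y)] at this
    rwa [neg_mul] at this

include hprop hmax in
/-- A maximal proper quadratic module satisfies `P ∪ -P = A`. -/
lemma union_neg (a : MvPolynomial τ ℝ) : a ∈ P ∨ -a ∈ P := by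
  by_contra hno
  push_neg at hno
  obtain ⟨ha, hna⟩ := hno
  obtain ⟨t1, ht1, s1, hs1, he1⟩ := neg_one_eq_of_not_mem hP hprop hmax ha
  obtain ⟨t2, ht2, s2, hs2, he2⟩ := neg_one_eq_of_not_mem hP hprop hmax hna
  -- -(s1 + s2) = s2 * t1 + s1 * t2 ∈ P
  have hsum : -(s1 + s2) = s2 * t1 + s1 * t2 := by
    have h1 : s2 * (-1 : MvPolynomial τ ℝ) = s2 * t1 + s2 * (s1 * a) := by
      rw [he1]; ring
    have h2 : s1 * (-1 : MvPolynomial τ ℝ) = s1 * t2 + s1 * (s2 * (-a)) := by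
      rw [he2]; ring
    have := congrArg₂ (· + ·) h1 h2
    linear_combination this
  have hmem : -(s1 + s2) ∈ P := by
    rw [hsum]
    exact hP.add_mem (hP.sos_mul_mem hs2 ht1) (hP.sos_mul_mem hs1 ht2)
  have hns1 : -s1 ∈ P := by
    have := hP.add_mem hmem (hP.sos_mem hs2)
    rwa [show -(s1 + s2) + s2 = -s1 from by ring] at this
  have hs1P : s1 ∈ P := hP.sos_mem hs1
  -- s1 * a ∈ P
  have hmul := supp_mul hP hs1P hns1 a
  have : (-1 : MvPolynomial τ ℝ) ∈ P := by
    rw [he1]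
    exact hP.add_mem ht1 (by rw [mul_comm]; exact hmul.1)
  exact hprop this

include hprop harch in
/-- A maximal proper Archimedean quadratic module is "closed". -/
lemma closed_lemma {b : MvPolynomial τ ℝ}
    (hmax : ∀ Q, IsQM Q → (-1 : MvPolynomial τ ℝ) ∉ Q → P ⊆ Q → Q = P)
    (hb : ∀ ε : ℝ, 0 < ε → C ε + b ∈ P) : b ∈ P := by
  by_contra hbP
  obtain ⟨t, ht, s, hs, he⟩ := neg_one_eq_of_not_mem hP hprop hmax hbP
  obtain ⟨k, hk, hks⟩ := harch s
  set ε : ℝ := 1 / (2 * k) with hε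
  have hεpos : 0 < ε := by positivity
  have h1 : s * (C ε + b) ∈ P := hP.sos_mul_mem hs (hb ε hεpos)
  have h2 : s * C ε - 1 ∈ P := by
    have hme := hP.add_mem h1 ht
    have heq : s * (C ε + b) + t = s * C ε - 1 := by linear_combination -he
    rwa [heq] at hme
  have h3 : ε • (C k - s) ∈ P := hP.smul_mem hεpos.le hks
  have hCεk : (C ε : MvPolynomial τ ℝ) * C k = C (1/2 : ℝ) := by
    have hek : ε * k = 1/2 := by
      rw [hε]
      field_simp
    rw [← map_mul, hek]
  have h4 : C (1/2 : ℝ) - 1 ∈ P := by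
    have hme := hP.add_mem h2 h3
    have heq : (s * C ε - 1) + ε • (C k - s) = C (1/2 : ℝ) - 1 := by
      rw [smul_eq_C_mul]
      linear_combination hCεk
    rwa [heq] at hme
  have h5 : (-1 : MvPolynomial τ ℝ) ∈ P := by
    have hme := hP.smul_mem (by norm_num : (0:ℝ) ≤ 2) h4
    have heq : (2:ℝ) • (C (1/2:ℝ) - (1 : MvPolynomial τ ℝ)) = (-1 : MvPolynomial τ ℝ) := by
      rw [smul_eq_C_mul]
      have h2C : (C (2:ℝ) : MvPolynomial τ ℝ) * C (1/2:ℝ) = 1 := by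
        rw [← map_mul]; norm_num
      have h2eq : (C (2:ℝ) : MvPolynomial τ ℝ) = 2 := map_ofNat C 2
      linear_combination h2C - h2eq
    rwa [heq] at hme
  exact hprop h5

end MaximalProper

end PutinarAux
namespace PutinarAux

open MvPolynomial

variable {τ : Type*}

section Character

variable {P : Set (MvPolynomial τ ℝ)} (hP : IsQM P)
  (hprop : (-1 : MvPolynomial τ ℝ) ∉ P)
  (hmax : ∀ Q, IsQM Q → (-1 : MvPolynomial τ ℝ) ∉ Q → P ⊆ Q → Q = P)
  (harch : IsArch P)

/-- The character associated with a maximal proper Archimedean quadratic module. -/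
noncomputable def phi (P : Set (MvPolynomial τ ℝ)) (a : MvPolynomial τ ℝ) : ℝ :=
  sInf {r : ℝ | C r - a ∈ P}

include hP hprop in
lemma const_nonneg_of_mem {r : ℝ} (h : (C r : MvPolynomial τ ℝ) ∈ P) : 0 ≤ r := by
  by_contra hr
  push_neg at hr
  apply hprop
  have hrpos : (0:ℝ) < -r := neg_pos.2 hr
  have hmem := hP.smul_mem (le_of_lt (div_pos one_pos hrpos)) h
  have heq : (1 / (-r) : ℝ) • (C r : MvPolynomial τ ℝ) = -1 := by
    have harith : (1 / (-r)) * r = -1 := by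
      field_simp
      rw [div_self hr.ne]
    rw [smul_eq_C_mul, ← map_mul, harith, map_neg, C_1]
  rwa [heq] at hmem

include harch in
lemma phi_set_nonempty (a : MvPolynomial τ ℝ) : {r : ℝ | C r - a ∈ P}.Nonempty := by
  obtain ⟨k, _, hk⟩ := harch a
  exact ⟨k, hk⟩

include hP hprop harch in
lemma phi_set_bdd (a : MvPolynomial τ ℝ) : BddBelow {r : ℝ | C r - a ∈ P} := by
  obtain ⟨k', _, hk'⟩ := harch (-a)
  rw [sub_neg_eq_add] at hk'
  refine ⟨-k', fun r hr => ?_⟩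
  have hmem := hP.add_mem hr hk'
  rw [show C r - a + (C k' + a) = C (r + k') from by rw [map_add]; ring] at hmem
  linarith [const_nonneg_of_mem hP hprop hmem]

include hP hprop harch in
lemma phi_le {a : MvPolynomial τ ℝ} {r : ℝ} (h : C r - a ∈ P) : phi P a ≤ r :=
  csInf_le (phi_set_bdd hP hprop harch a) h

include hP harch in
lemma mem_of_phi_lt {a : MvPolynomial τ ℝ} {r : ℝ} (h : phi P a < r) : C r - a ∈ P := by
  obtain ⟨r', hr', hlt⟩ := exists_lt_of_csInf_lt (phi_set_nonempty harch a) h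
  have := hP.add_mem (hP.const_mem (by linarith : (0:ℝ) ≤ r - r')) hr'
  rwa [show C (r - r') + (C r' - a) = C r - a from by rw [map_sub]; ring] at this

include hP hprop hmax harch in
lemma supp_sub_phi (a : MvPolynomial τ ℝ) :
    a - C (phi P a) ∈ P ∧ -(a - C (phi P a)) ∈ P := by
  constructor
  · apply closed_lemma hP hprop harch hmax
    intro ε hε
    have hnot : C (phi P a - ε) - a ∉ P := by
      intro hc
      have := phi_le hP hprop harch hc
      linarith
    have := (union_neg hP hprop hmax (C (phi P a - ε) - a)).resolve_left hnot
    rwa [show -(C (phi P a - ε) - a) = C ε + (a - C (phi P a)) from by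
      rw [map_sub]; ring] at this
  · apply closed_lemma hP hprop harch hmax
    intro ε hε
    have := mem_of_phi_lt hP harch (show phi P a < phi P a + ε from by linarith)
    rwa [show C (phi P a + ε) - a = C ε + -(a - C (phi P a)) from by
      rw [map_add]; ring] at this

include hP in
lemma phi_eq_of_supp {x : MvPolynomial τ ℝ} (hx : x ∈ P) (hx' : -x ∈ P)
    (a : MvPolynomial τ ℝ) : phi P (a + x) = phi P a := by
  unfold phi
  congr 1
  ext r
  constructor
  · intro h
    have := hP.add_mem h hx
    rwa [show C r - (a + x) + x = C r - a from by ring] at this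
  · intro h
    have := hP.add_mem h hx'
    rwa [show C r - a + -x = C r - (a + x) from by ring] at this

include hP hprop in
lemma phi_const (r : ℝ) : phi P (C r) = r := by
  unfold phi
  have hset : {q : ℝ | C q - C r ∈ P} = Set.Ici r := by
    ext q
    simp only [Set.mem_setOf_eq, Set.mem_Ici]
    rw [← map_sub]
    constructor
    · intro h
      linarith [const_nonneg_of_mem hP hprop h]
    · intro h
      exact hP.const_mem (by linarith)
  rw [hset, csInf_Ici]

include hP hprop hmax harch in
lemma phi_add (a b : MvPolynomial τ ℝ) : phi P (a + b) = phi P a + phi P b := by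
  obtain ⟨ha1, ha2⟩ := supp_sub_phi hP hprop hmax harch a
  obtain ⟨hb1, hb2⟩ := supp_sub_phi hP hprop hmax harch b
  have hx1 : (a - C (phi P a)) + (b - C (phi P b)) ∈ P := hP.add_mem ha1 hb1
  have hx2 : -((a - C (phi P a)) + (b - C (phi P b))) ∈ P := by
    have := hP.add_mem ha2 hb2
    rwa [show -(a - C (phi P a)) + -(b - C (phi P b))
      = -((a - C (phi P a)) + (b - C (phi P b))) from by ring] at this
  have key : a + b = C (phi P a + phi P b) + ((a - C (phi P a)) + (b - C (phi P b))) := by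
    rw [map_add]; ring
  rw [key, phi_eq_of_supp hP hx1 hx2, phi_const hP hprop]

include hP hprop hmax harch in
lemma phi_mul (a b : MvPolynomial τ ℝ) : phi P (a * b) = phi P a * phi P b := by
  obtain ⟨ha1, ha2⟩ := supp_sub_phi hP hprop hmax harch a
  obtain ⟨hb1, hb2⟩ := supp_sub_phi hP hprop hmax harch b
  set xa := a - C (phi P a) with hxa
  set xb := b - C (phi P b) with hxb
  have t1 := supp_mul hP hb1 hb2 (C (phi P a))
  have t2 := supp_mul hP ha1 ha2 (C (phi P b))
  have t3 := supp_mul hP ha1 ha2 xb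
  have hx1 : C (phi P a) * xb + C (phi P b) * xa + xb * xa ∈ P :=
    hP.add_mem (hP.add_mem t1.1 t2.1) t3.1
  have hx2 : -(C (phi P a) * xb + C (phi P b) * xa + xb * xa) ∈ P := by
    have := hP.add_mem (hP.add_mem t1.2 t2.2) t3.2
    rwa [show -(C (phi P a) * xb) + -(C (phi P b) * xa) + -(xb * xa)
      = -(C (phi P a) * xb + C (phi P b) * xa + xb * xa) from by ring] at this
  have key : a * b = C (phi P a * phi P b)
      + (C (phi P a) * xb + C (phi P b) * xa + xb * xa) := by
    rw [map_mul, hxa, hxb]; ring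
  rw [key, phi_eq_of_supp hP hx1 hx2, phi_const hP hprop]

include hP hprop harch in
lemma phi_nonneg {a : MvPolynomial τ ℝ} (ha : a ∈ P) : 0 ≤ phi P a := by
  apply le_csInf (phi_set_nonempty harch a)
  intro r hr
  have := hP.add_mem hr ha
  rw [show C r - a + a = C r from by ring] at this
  exact const_nonneg_of_mem hP hprop this

include hP hprop hmax harch in
lemma phi_eq_eval (p : MvPolynomial τ ℝ) :
    phi P p = eval (fun i => phi P (X i)) p := by
  let φ : MvPolynomial τ ℝ →+* ℝ :=
    { toFun := phi P
      map_one' := by simpa using phi_const hP hprop 1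
      map_mul' := phi_mul hP hprop hmax harch
      map_zero' := by simpa using phi_const hP hprop 0
      map_add' := phi_add hP hprop hmax harch }
  have : φ = (eval (fun i => phi P (X i)) : MvPolynomial τ ℝ →+* ℝ) := by
    apply ringHom_ext
    · intro r
      simp only [φ, RingHom.coe_mk, MonoidHom.coe_mk, OneHom.coe_mk, eval_C]
      exact phi_const hP hprop r
    · intro i
      simp only [φ, RingHom.coe_mk, MonoidHom.coe_mk, OneHom.coe_mk, eval_X]
      rfl
  exact DFunLike.congr_fun this p

end Character

end PutinarAux
namespace PutinarAux

/-- The Taylor coefficients of `(1-v)^(-1/2)`, defined recursively. -/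
noncomputable def aseq : ℕ → ℝ
  | 0 => 1
  | (j+1) => aseq j * (2*j+1) / (2*j+2)

lemma aseq_zero : aseq 0 = 1 := rfl

lemma aseq_pos : ∀ j, 0 < aseq j := by
  intro j
  induction j with
  | zero => norm_num [aseq]
  | succ j ih =>
    rw [aseq]
    have h1 : (0:ℝ) < 2*j+1 := by positivity
    have h2 : (0:ℝ) < 2*j+2 := by positivity
    positivity

lemma aseq_succ_le (j : ℕ) : aseq (j+1) ≤ aseq j := by
  rw [aseq, mul_div_assoc]
  have h : (2*(j:ℝ)+1) / (2*j+2) ≤ 1 := by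
    rw [div_le_one (by positivity)]
    linarith
  calc aseq j * ((2*(j:ℝ)+1) / (2*j+2)) ≤ aseq j * 1 :=
        mul_le_mul_of_nonneg_left h (aseq_pos j).le
    _ = aseq j := mul_one _

lemma aseq_antitone : Antitone aseq :=
  antitone_nat_of_succ_le aseq_succ_le

lemma aseq_key (j : ℕ) : ((j:ℝ)+1) * aseq (j+1) = ((j:ℝ) + 1/2) * aseq j := by
  rw [aseq, mul_div_assoc]
  have h2 : (2*(j:ℝ)+2) ≠ 0 := by positivity
  field_simp

/-- Truncated autocorrelation of `aseq`. -/
noncomputable def convS (l : ℕ) : ℝ := ∑ j ∈ Finset.range (l+1), aseq j * aseq (l - j)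

lemma cast_mul_convS (l : ℕ) :
    (l:ℝ) * convS l = 2 * ∑ j ∈ Finset.range (l+1), (j:ℝ) * (aseq j * aseq (l - j)) := by
  have hrefl : ∑ j ∈ Finset.range (l+1), ((l - j : ℕ):ℝ) * (aseq j * aseq (l - j))
      = ∑ j ∈ Finset.range (l+1), (j:ℝ) * (aseq j * aseq (l - j)) := by
    have := Finset.sum_range_reflect
      (fun j => (j:ℝ) * (aseq j * aseq (l - j))) (l+1)
    rw [← this]
    apply Finset.sum_congr rfl
    intro j hj
    have hjl : j ≤ l := Nat.lt_succ_iff.mp (Finset.mem_range.mp hj)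
    have h1 : l + 1 - 1 - j = l - j := by omega
    have h2 : l - (l - j) = j := Nat.sub_sub_self hjl
    rw [h1, h2]
    ring
  have hsplit : (l:ℝ) * convS l
      = ∑ j ∈ Finset.range (l+1), (j:ℝ) * (aseq j * aseq (l - j))
        + ∑ j ∈ Finset.range (l+1), ((l - j : ℕ):ℝ) * (aseq j * aseq (l - j)) := by
    rw [convS, Finset.mul_sum, ← Finset.sum_add_distrib]
    apply Finset.sum_congr rfl
    intro j hj
    have hjl : j ≤ l := Nat.lt_succ_iff.mp (Finset.mem_range.mp hj)
    have : ((l - j : ℕ):ℝ) = (l:ℝ) - (j:ℝ) := by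
      rw [Nat.cast_sub hjl]
    rw [this]
    ring
  rw [hsplit, hrefl]
  ring

lemma convS_eq_one : ∀ l, convS l = 1 := by
  intro l
  induction l with
  | zero => simp [convS, aseq_zero]
  | succ l ih =>
    -- (l+1) * convS (l+1) = (l+1) * convS l
    have key : ((l:ℝ)+1) * convS (l+1) = ((l:ℝ)+1) * convS l := by
      have h1 := cast_mul_convS (l+1)
      have h2 := cast_mul_convS l
      -- T_{l+1} = ∑_{i ∈ range (l+1)} (i+1) * (aseq (i+1) * aseq (l - i))
      have hshift : ∑ j ∈ Finset.range (l+2), (j:ℝ) * (aseq j * aseq (l + 1 - j))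
          = ∑ i ∈ Finset.range (l+1), ((i:ℝ)+1) * (aseq (i+1) * aseq (l - i)) := by
        rw [Finset.sum_range_succ' (fun j => (j:ℝ) * (aseq j * aseq (l + 1 - j))) (l+1)]
        simp only [Nat.cast_zero, zero_mul, add_zero, Nat.cast_add, Nat.cast_one]
        apply Finset.sum_congr rfl
        intro i hi
        have : l + 1 - (i + 1) = l - i := by omega
        rw [this]
      have hkey : ∑ i ∈ Finset.range (l+1), ((i:ℝ)+1) * (aseq (i+1) * aseq (l - i))
          = ∑ i ∈ Finset.range (l+1), (i:ℝ) * (aseq i * aseq (l - i))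
            + (1/2) * convS l := by
        rw [convS, Finset.mul_sum, ← Finset.sum_add_distrib]
        apply Finset.sum_congr rfl
        intro i _
        have := aseq_key i
        calc ((i:ℝ)+1) * (aseq (i+1) * aseq (l - i))
            = (((i:ℝ)+1) * aseq (i+1)) * aseq (l - i) := by ring
          _ = (((i:ℝ) + 1/2) * aseq i) * aseq (l - i) := by rw [this]
          _ = (i:ℝ) * (aseq i * aseq (l - i)) + 1/2 * (aseq i * aseq (l - i)) := by ring
      -- combine
      have hcast : ((l:ℝ)+1) = ((l+1 : ℕ):ℝ) := by push_cast; ring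
      rw [hcast]
      rw [h1, hshift, hkey]
      rw [show (2:ℝ) * (∑ i ∈ Finset.range (l+1), (i:ℝ) * (aseq i * aseq (l - i))
          + (1/2) * convS l)
        = 2 * ∑ i ∈ Finset.range (l+1), (i:ℝ) * (aseq i * aseq (l - i)) + convS l from by ring]
      rw [← h2]
      push_cast
      ring
    have hne : ((l:ℝ)+1) ≠ 0 := by positivity
    have := mul_left_cancel₀ hne key
    rw [this, ih]

end PutinarAux
namespace PutinarAux

open Polynomial

/-- Truncated Taylor polynomial of `(1-v)^(-1/2)` (in the variable `v`). -/
noncomputable def qpoly (M : ℕ) : Polynomial ℝ :=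
  ∑ j ∈ Finset.range (M+1), Polynomial.C (aseq j) * Polynomial.X ^ j

lemma qpoly_coeff (M l : ℕ) : (qpoly M).coeff l = if l ≤ M then aseq l else 0 := by
  rw [qpoly, Polynomial.finset_sum_coeff]
  simp only [Polynomial.coeff_C_mul, Polynomial.coeff_X_pow, mul_ite, mul_one, mul_zero]
  rw [Finset.sum_ite_eq (Finset.range (M+1)) l (fun j => aseq j)]
  simp [Nat.lt_succ_iff]

lemma qpoly_coeff_nonneg (M l : ℕ) : 0 ≤ (qpoly M).coeff l := by
  rw [qpoly_coeff]
  split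
  · exact (aseq_pos l).le
  · exact le_refl 0

lemma qpoly_coeff_succ_le (M l : ℕ) : (qpoly M).coeff (l+1) ≤ (qpoly M).coeff l := by
  rw [qpoly_coeff, qpoly_coeff]
  by_cases h1 : l + 1 ≤ M
  · rw [if_pos h1, if_pos (by omega)]
    exact aseq_succ_le l
  · rw [if_neg h1]
    split
    · exact (aseq_pos l).le
    · exact le_refl 0

/-- Coefficients of the square. -/
noncomputable def rcoef (M l : ℕ) : ℝ := ((qpoly M)^2).coeff l

lemma rcoef_eq_sum (M l : ℕ) :
    rcoef M l = ∑ j ∈ Finset.range (l+1), (qpoly M).coeff j * (qpoly M).coeff (l-j) := by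
  rw [rcoef, sq, Polynomial.coeff_mul, Finset.Nat.sum_antidiagonal_eq_sum_range_succ_mk]

lemma rcoef_nonneg (M l : ℕ) : 0 ≤ rcoef M l := by
  rw [rcoef_eq_sum]
  exact Finset.sum_nonneg fun j _ =>
    mul_nonneg (qpoly_coeff_nonneg M j) (qpoly_coeff_nonneg M (l - j))

lemma rcoef_eq_one {M l : ℕ} (hl : l ≤ M) : rcoef M l = 1 := by
  rw [rcoef_eq_sum]
  have : ∀ j ∈ Finset.range (l+1), (qpoly M).coeff j * (qpoly M).coeff (l-j)
      = aseq j * aseq (l - j) := by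
    intro j hj
    have hjl : j ≤ l := Nat.lt_succ_iff.mp (Finset.mem_range.mp hj)
    rw [qpoly_coeff, qpoly_coeff, if_pos (le_trans hjl hl), if_pos (le_trans (Nat.sub_le l j) hl)]
  rw [Finset.sum_congr rfl this]
  exact convS_eq_one l

lemma rcoef_succ_le (M l : ℕ) : rcoef M (l+1) ≤ rcoef M l := by
  by_cases h1 : l + 1 ≤ M
  · rw [rcoef_eq_one h1, rcoef_eq_one (by omega)]
  · rw [rcoef_eq_sum, rcoef_eq_sum]
    rw [Finset.sum_range_succ' (fun j => (qpoly M).coeff j * (qpoly M).coeff (l+1-j)) (l+1)]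
    have hlast : (qpoly M).coeff 0 * (qpoly M).coeff (l+1-0) = 0 := by
      rw [Nat.sub_zero, qpoly_coeff M (l+1), if_neg h1, mul_zero]
    rw [hlast, add_zero]
    apply Finset.sum_le_sum
    intro i hi
    have : l + 1 - (i+1) = l - i := by omega
    rw [this]
    exact mul_le_mul_of_nonneg_right (qpoly_coeff_succ_le M i) (qpoly_coeff_nonneg M (l-i))

/-- The defect polynomial `1 - (1-v)·q(v)²`. -/
noncomputable def DP (M : ℕ) : Polynomial ℝ :=
  1 - (1 - Polynomial.X) * (qpoly M)^2

lemma DP_coeff_zero (M : ℕ) : (DP M).coeff 0 = 0 := by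
  rw [DP, Polynomial.coeff_sub, Polynomial.mul_coeff_zero]
  simp only [Polynomial.coeff_one_zero, Polynomial.coeff_sub, Polynomial.coeff_X_zero]
  have : ((qpoly M)^2).coeff 0 = rcoef M 0 := rfl
  rw [this, rcoef_eq_one (Nat.zero_le M)]
  norm_num

lemma DP_coeff_succ (M l : ℕ) : (DP M).coeff (l+1) = rcoef M l - rcoef M (l+1) := by
  rw [DP, Polynomial.coeff_sub]
  rw [show (1 - Polynomial.X : Polynomial ℝ) * (qpoly M)^2
    = (qpoly M)^2 - Polynomial.X * (qpoly M)^2 from by ring]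
  rw [Polynomial.coeff_sub, Polynomial.coeff_X_mul]
  have h1 : (1 : Polynomial ℝ).coeff (l+1) = 0 := by
    rw [Polynomial.coeff_one]
    simp
  rw [h1, rcoef, rcoef]
  ring

lemma DP_coeff_nonneg (M l : ℕ) : 0 ≤ (DP M).coeff l := by
  cases l with
  | zero => rw [DP_coeff_zero]
  | succ l =>
    rw [DP_coeff_succ]
    linarith [rcoef_succ_le M l]

lemma qpoly_natDegree_le (M : ℕ) : (qpoly M).natDegree ≤ M := by
  apply Polynomial.natDegree_sum_le_of_forall_le
  intro j hj
  calc (Polynomial.C (aseq j) * Polynomial.X ^ j).natDegree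
      ≤ (Polynomial.X ^ j : Polynomial ℝ).natDegree := Polynomial.natDegree_C_mul_le _ _
    _ = j := Polynomial.natDegree_X_pow j
    _ ≤ M := Nat.lt_succ_iff.mp (Finset.mem_range.mp hj)

lemma DP_natDegree_lt (M : ℕ) : (DP M).natDegree < 2*M+3 := by
  have h1 : ((1 - Polynomial.X) * (qpoly M)^2 : Polynomial ℝ).natDegree ≤ 1 + 2*M := by
    apply le_trans (Polynomial.natDegree_mul_le)
    have ha : (1 - Polynomial.X : Polynomial ℝ).natDegree ≤ 1 := by
      apply le_trans (Polynomial.natDegree_sub_le _ _)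
      simp [Polynomial.natDegree_X]
    have hb : ((qpoly M)^2).natDegree ≤ 2*M := by
      apply le_trans (Polynomial.natDegree_pow_le)
      have := qpoly_natDegree_le M
      omega
    omega
  have := Polynomial.natDegree_sub_le (1 : Polynomial ℝ) ((1 - Polynomial.X) * (qpoly M)^2)
  rw [DP]
  have h0 : (1 : Polynomial ℝ).natDegree = 0 := Polynomial.natDegree_one
  omega

lemma DP_eval_nonneg {M : ℕ} {z : ℝ} (hz0 : 0 ≤ z) : 0 ≤ (DP M).eval z := by
  rw [Polynomial.eval_eq_sum_range' (DP_natDegree_lt M)]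
  exact Finset.sum_nonneg fun i _ => mul_nonneg (DP_coeff_nonneg M i) (pow_nonneg hz0 i)

lemma DP_eval_le {M : ℕ} {z : ℝ} (hz0 : 0 ≤ z) (hz1 : z < 1) :
    (DP M).eval z ≤ z^(M+1) := by
  have hEeval : ((qpoly M)^2).eval z = ∑ i ∈ Finset.range (2*M+3), rcoef M i * z^i := by
    apply Polynomial.eval_eq_sum_range'
    have := qpoly_natDegree_le M
    have := Polynomial.natDegree_pow_le (p := qpoly M) (n := 2)
    omega
  have hge : ∑ i ∈ Finset.range (M+1), z^i ≤ ((qpoly M)^2).eval z := by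
    rw [hEeval]
    have hsub : Finset.range (M+1) ⊆ Finset.range (2*M+3) := by
      intro x hx; simp only [Finset.mem_range] at hx ⊢; omega
    calc ∑ i ∈ Finset.range (M+1), z^i
        = ∑ i ∈ Finset.range (M+1), rcoef M i * z^i := by
          apply Finset.sum_congr rfl
          intro i hi
          rw [rcoef_eq_one (Nat.lt_succ_iff.mp (Finset.mem_range.mp hi)), one_mul]
      _ ≤ ∑ i ∈ Finset.range (2*M+3), rcoef M i * z^i := by
          apply Finset.sum_le_sum_of_subset_of_nonneg hsub
          intro i _ _
          exact mul_nonneg (rcoef_nonneg M i) (pow_nonneg hz0 i)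
  have hgeom : (1 - z) * ∑ i ∈ Finset.range (M+1), z^i = 1 - z^(M+1) := by
    have := geom_sum_mul z (M+1)
    linear_combination -this
  have heval : (DP M).eval z = 1 - (1-z) * ((qpoly M)^2).eval z := by
    rw [DP]
    simp [Polynomial.eval_mul, Polynomial.eval_sub, Polynomial.eval_one, Polynomial.eval_X]
  rw [heval]
  have h1z : 0 ≤ 1 - z := by linarith
  nlinarith [mul_le_mul_of_nonneg_left hge h1z]

end PutinarAux
namespace PutinarAux

open MvPolynomial

variable {τ : Type*}

lemma smul_C_eq (r q : ℝ) : r • (C q : MvPolynomial τ ℝ) = C (r * q) := by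
  rw [smul_eq_C_mul, ← map_mul]

namespace IsQM

variable {T : Set (MvPolynomial τ ℝ)} (hT : IsQM T)

include hT

lemma pow_mem_of_base {z : MvPolynomial τ ℝ} (hz : z ∈ T) (l : ℕ) : z ^ l ∈ T := by
  rcases Nat.even_or_odd l with ⟨m, rfl⟩ | ⟨m, rfl⟩
  · rw [show z ^ (m + m) = (z ^ m) ^ 2 * 1 from by ring]
    exact hT.sq_mul_mem _ hT.one_mem
  · rw [show z ^ (2*m + 1) = (z ^ m) ^ 2 * z from by ring]
    exact hT.sq_mul_mem _ hz

lemma pow_mul_mem_of_base {z w : MvPolynomial τ ℝ} (hzw : z * w ∈ T) (hw : w ∈ T) (l : ℕ) :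
    z ^ l * w ∈ T := by
  rcases Nat.even_or_odd l with ⟨m, rfl⟩ | ⟨m, rfl⟩
  · rw [show z ^ (m + m) * w = (z ^ m) ^ 2 * w from by ring]
    exact hT.sq_mul_mem _ hw
  · rw [show z ^ (2*m + 1) * w = (z ^ m) ^ 2 * (z * w) from by ring]
    exact hT.sq_mul_mem _ hzw

/-- Putinar's bootstrap: if `σ·p = 1 + t` with `σ` SOS and `t ∈ T` for an Archimedean
quadratic module `T`, then `p ∈ T`. -/
theorem bootstrap (harch : IsArch T) {p sos t : MvPolynomial τ ℝ}
    (hsos : IsSOS sos) (ht : t ∈ T) (he : sos * p = 1 + t) : p ∈ T := by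
  classical
  -- Bounds on p
  obtain ⟨N₁, hN₁pos, hN₁⟩ := harch p
  obtain ⟨N₂, hN₂pos, hN₂⟩ := harch (-p)
  set N : ℝ := max N₁ N₂ with hNdef
  have hNpos : 0 < N := lt_of_lt_of_le hN₁pos (le_max_left _ _)
  have hNp : C N - p ∈ T := hT.enlarge_const (le_max_left _ _) hN₁
  have hNp' : C N + p ∈ T := by
    have := hT.enlarge_const (k' := N) (le_max_right _ _) hN₂
    rwa [sub_neg_eq_add] at this
  set lam : ℝ := 1 / (2 * N) with hlamdef
  have hlampos : 0 < lam := by positivity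
  set σ2 : MvPolynomial τ ℝ := sos + C lam with hσ2def
  have hlamN : lam * N = 1 / 2 := by
    rw [hlamdef]; field_simp
  have hσ2p : σ2 * p = C (1/2 : ℝ) + (t + lam • (p + C N)) := by
    rw [hσ2def, smul_eq_C_mul]
    have hconst : (C lam : MvPolynomial τ ℝ) * C N = C (1/2 : ℝ) := by
      rw [← map_mul, hlamN]
    have hhalf : (C (1/2:ℝ) : MvPolynomial τ ℝ) + C (1/2:ℝ) = 1 := by
      rw [← map_add]; norm_num
    linear_combination he - hconst - hhalf
  have ht1 : t + lam • (p + C N) ∈ T := by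
    refine hT.add_mem ht (hT.smul_mem hlampos.le ?_)
    rw [add_comm]; exact hNp'
  -- normalization
  obtain ⟨k0, hk0pos, hk0⟩ := harch σ2
  set k' : ℝ := k0 + lam + 1 with hk'def
  have hk'pos : 0 < k' := by positivity
  have hk' : C k' - σ2 ∈ T := hT.enlarge_const (by rw [hk'def]; linarith) hk0
  set δ : ℝ := lam / k' with hδdef
  have hδ0 : 0 < δ := by positivity
  have hδ1 : δ < 1 := by
    rw [hδdef, div_lt_one hk'pos, hk'def]; linarith
  set s : MvPolynomial τ ℝ := (1 / k') • σ2 with hsdef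
  have hinvk : (1 / k') * k' = 1 := by field_simp
  have hz : (1 : MvPolynomial τ ℝ) - s ∈ T := by
    have hmem := hT.smul_mem (by positivity : (0:ℝ) ≤ 1/k') hk'
    rwa [smul_sub, smul_C_eq, hinvk, C_1, ← hsdef] at hmem
  have hsδ : s - C δ ∈ T := by
    have hmem := hT.smul_mem (by positivity : (0:ℝ) ≤ 1/k') (hT.sos_mem hsos)
    have heq : (1/k') • sos = s - C δ := by
      rw [hsdef, hσ2def, smul_add, smul_C_eq, hδdef]
      rw [show (1/k') * lam = lam / k' from by ring]
      ring
    rwa [heq] at hmem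
  set c : ℝ := 1 / (2 * k') with hcdef
  have hcpos : 0 < c := by positivity
  set t2 : MvPolynomial τ ℝ := (1 / k') • (t + lam • (p + C N)) with ht2def
  have ht2 : t2 ∈ T := hT.smul_mem (by positivity) ht1
  have hsp : s * p = C c + t2 := by
    rw [hsdef, ht2def, smul_mul_assoc, hσ2p, smul_add, smul_C_eq]
    rw [show (1/k') * (1/2 : ℝ) = c from by rw [hcdef]; field_simp]
  -- choice of M
  have hrh0 : (0:ℝ) < c / (2 * N) := by positivity
  obtain ⟨M, hM⟩ := exists_pow_lt_of_lt_one hrh0 (show 1 - δ < 1 from by linarith)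
  have h1δ0 : (0:ℝ) ≤ 1 - δ := by linarith
  have hMbound : (1 - δ) ^ (M + 1) < c / (2 * N) :=
    lt_of_le_of_lt (pow_le_pow_of_le_one h1δ0 (by linarith) (Nat.le_succ M)) hM
  set rh : ℝ := c / (2 * N) with hrhdef
  have hrhpos : 0 < rh := hrh0
  have hrhN : rh * N = c / 2 := by
    rw [hrhdef]; field_simp
  -- the elements GA and DA
  set GA : MvPolynomial τ ℝ := Polynomial.aeval (1 - s) (qpoly M) with hGAdef
  set DA : MvPolynomial τ ℝ := Polynomial.aeval (1 - s) (DP M) with hDAdef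
  set ρ : ℝ := (DP M).eval (1 - δ) with hρdef
  have hρ0 : 0 ≤ ρ := DP_eval_nonneg h1δ0
  have hρle : ρ < rh := lt_of_le_of_lt (DP_eval_le h1δ0 (by linarith)) hMbound
  -- membership infrastructure
  have hprod : (1 - s) * (s - C δ) ∈ T := by
    have hmem := hT.add_mem (hT.sq_mul_mem (s - C δ) hz) (hT.sq_mul_mem (1 - s) hsδ)
    have hC1δ : (C (1 - δ) : MvPolynomial τ ℝ) = 1 - C δ := by
      rw [map_sub, C_1]
    have hident : (s - C δ) ^ 2 * (1 - s) + (1 - s) ^ 2 * (s - C δ)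
        = (1 - δ) • ((1 - s) * (s - C δ)) := by
      rw [smul_eq_C_mul, hC1δ]
      ring
    rw [hident] at hmem
    have := hT.smul_mem (by positivity : (0:ℝ) ≤ 1/(1-δ)) hmem
    rwa [smul_smul, show (1/(1-δ)) * (1-δ) = 1 from by
      have : (1-δ) ≠ 0 := by linarith
      field_simp, one_smul] at this
  have e1 : ∀ l : ℕ, (1 - s) ^ l ∈ T := hT.pow_mem_of_base hz
  have e2 : ∀ l : ℕ, (1 - s) ^ l * (s - C δ) ∈ T := hT.pow_mul_mem_of_base hprod hsδ
  have e3 : ∀ l : ℕ, C ((1 - δ) ^ l) - (1 - s) ^ l ∈ T := by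
    intro l
    induction l with
    | zero => simpa using hT.zero_mem
    | succ l ih =>
      have hmem := hT.add_mem (hT.smul_mem h1δ0 ih) (e2 l)
      have hC1δ : (C (1 - δ) : MvPolynomial τ ℝ) = 1 - C δ := by
        rw [map_sub, C_1]
      have hCp : (C ((1-δ)^(l+1)) : MvPolynomial τ ℝ) = C (1-δ) * C ((1-δ)^l) := by
        rw [← map_mul]; congr 1; ring
      have hident : (1 - δ) • (C ((1-δ)^l) - (1 - s) ^ l) + (1 - s) ^ l * (s - C δ)
          = C ((1-δ)^(l+1)) - (1 - s) ^ (l+1) := by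
        rw [smul_eq_C_mul, hCp, hC1δ]
        ring
      rwa [hident] at hmem
  -- DA expansions
  have hDAsum : DA = ∑ l ∈ Finset.range (2*M+3), (DP M).coeff l • (1 - s) ^ l := by
    rw [hDAdef]
    exact Polynomial.aeval_eq_sum_range' (DP_natDegree_lt M) _
  have hρsum : ρ = ∑ l ∈ Finset.range (2*M+3), (DP M).coeff l * (1 - δ) ^ l := by
    rw [hρdef]
    exact Polynomial.eval_eq_sum_range' (DP_natDegree_lt M) _
  have hDAmem : DA ∈ T := by
    rw [hDAsum]
    exact hT.sum_mem fun l _ => hT.smul_mem (DP_coeff_nonneg M l) (e1 l)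
  have hρDA : C rh - DA ∈ T := by
    have hsum : C ρ - DA
        = ∑ l ∈ Finset.range (2*M+3), (DP M).coeff l • (C ((1-δ)^l) - (1 - s) ^ l) := by
      rw [hρsum, hDAsum, map_sum, ← Finset.sum_sub_distrib]
      apply Finset.sum_congr rfl
      intro l _
      rw [smul_sub, smul_C_eq]
    have hmem1 : C ρ - DA ∈ T := by
      rw [hsum]
      exact hT.sum_mem fun l _ => hT.smul_mem (DP_coeff_nonneg M l) (e3 l)
    have := hT.add_mem (hT.const_mem (by linarith : (0:ℝ) ≤ rh - ρ)) hmem1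
    rwa [show C (rh - ρ) + (C ρ - DA) = C rh - DA from by rw [map_sub]; ring] at this
  have hDAeq : DA = 1 - s * GA ^ 2 := by
    rw [hDAdef, hGAdef, DP]
    rw [map_sub, map_one, map_mul, map_pow, map_sub, map_one, Polynomial.aeval_X]
    rw [sub_sub_cancel]
  -- GA ≥ 1
  have hGAsum : GA = ∑ j ∈ Finset.range (M+1), aseq j • (1 - s) ^ j := by
    rw [hGAdef, qpoly, map_sum]
    apply Finset.sum_congr rfl
    intro j _
    rw [map_mul, map_pow, Polynomial.aeval_X, Polynomial.aeval_C, smul_eq_C_mul]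
    rfl
  have hGA1 : GA - 1 ∈ T := by
    rw [hGAsum, Finset.sum_range_succ' (fun j => aseq j • (1 - s) ^ j) M]
    rw [show aseq 0 • (1 - s) ^ 0 = (1 : MvPolynomial τ ℝ) from by
      rw [aseq_zero, pow_zero, one_smul]]
    rw [add_sub_cancel_right]
    exact hT.sum_mem fun i _ => hT.smul_mem (aseq_pos (i+1)).le (e1 (i+1))
  have hGsq : GA ^ 2 * C c - C c ∈ T := by
    have hident : GA ^ 2 * C c - C c = c • ((GA - 1)^2) + (2*c) • (GA - 1) := by
      rw [smul_eq_C_mul, smul_eq_C_mul, map_mul, map_ofNat]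
      ring
    rw [hident]
    exact hT.add_mem (hT.smul_mem hcpos.le (hT.sq_mem _))
      (hT.smul_mem (by positivity) hGA1)
  -- assembling
  set t3 : MvPolynomial τ ℝ := (GA ^ 2 * C c - C c) + GA ^ 2 * t2 with ht3def
  have ht3 : t3 ∈ T := hT.add_mem hGsq (hT.sq_mul_mem GA ht2)
  have hmain : GA ^ 2 * (s * p) = C c + t3 := by
    rw [hsp, ht3def]; ring
  have hsq2 : C (N^2) - p^2 ∈ T := hT.sq_diff_mem hNpos hNp hNp'
  have hsq1 : C (rh^2) - DA^2 ∈ T := by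
    refine hT.sq_diff_mem hrhpos hρDA ?_
    have := hT.add_mem (hT.const_mem hrhpos.le) hDAmem
    exact this
  have hcc : (C ((rh*N)^2) : MvPolynomial τ ℝ) = C (rh^2) * C (N^2) := by
    rw [← map_mul]; congr 1; ring
  have hw2 : C ((rh*N)^2) - (DA * p)^2 ∈ T := by
    have hmem := hT.add_mem (hT.smul_mem (by positivity : (0:ℝ) ≤ rh^2) hsq2)
      (hT.sq_mul_mem p hsq1)
    have hident : (rh^2) • (C (N^2) - p^2) + p^2 * (C (rh^2) - DA^2)
        = C ((rh*N)^2) - (DA * p)^2 := by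
      rw [smul_eq_C_mul, hcc]
      ring
    rwa [hident] at hmem
  have hwrec : C (rh*N) + DA * p ∈ T := hT.recover_mem (by positivity) hw2
  have hfin : GA ^ 2 * (s * p) + DA * p = p := by
    rw [hDAeq]; ring
  have hpeq : p = C (c - rh*N) + (t3 + (C (rh*N) + DA * p)) := by
    rw [map_sub]
    calc p = GA ^ 2 * (s * p) + DA * p := hfin.symm
      _ = (C c + t3) + DA * p := by rw [hmain]
      _ = C c - C (rh*N) + (t3 + (C (rh*N) + DA * p)) := by ring
  rw [hpeq]
  refine hT.add_mem (hT.const_mem ?_) (hT.add_mem ht3 hwrec)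
  rw [hrhN]
  linarith

end IsQM

end PutinarAux
namespace PutinarAux

open MvPolynomial

lemma arch_mono {τ : Type*} {P Q : Set (MvPolynomial τ ℝ)} (h : IsArch P) (hPQ : P ⊆ Q) :
    IsArch Q :=
  fun a => let ⟨k, hk, hm⟩ := h a; ⟨k, hk, hPQ hm⟩

/-- Putinar's Positivstellensatz for an Archimedean quadratic module. -/
theorem putinar {τ ι : Type*} [Fintype ι] [DecidableEq ι] (G : ι → MvPolynomial τ ℝ)
    (harch : IsArch {q | InQM G q}) {p : MvPolynomial τ ℝ}
    (hp : ∀ x : τ → ℝ, (∀ l, 0 ≤ eval x (G l)) → 0 < eval x p) :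
    InQM G p := by
  have hT : IsQM {q | InQM G q} := isQM_inQM G
  by_cases hneg : (-1 : MvPolynomial τ ℝ)
      ∈ {x | ∃ t ∈ {q | InQM G q}, ∃ s, IsSOS s ∧ x = t + s * (-p)}
  · obtain ⟨t, ht, s, hs, he⟩ := hneg
    have he' : s * p = 1 + t := by linear_combination he
    exact hT.bootstrap harch hs ht he'
  · have hT2 : IsQM {x | ∃ t ∈ {q | InQM G q}, ∃ s, IsSOS s ∧ x = t + s * (-p)} :=
      isQM_ext hT (-p)
    obtain ⟨P, hsub, hPQM, hPprop, hPmax⟩ := exists_maximal_proper hT2 hneg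
    have hTsub : {q | InQM G q} ⊆ P := by
      intro x hx
      exact hsub ⟨x, hx, 0, isSOS_zero, by ring⟩
    have harchP : IsArch P := arch_mono harch hTsub
    have hphi : ∀ q : MvPolynomial τ ℝ,
        phi P q = eval (fun i => phi P (X i)) q := phi_eq_eval hPQM hPprop hPmax harchP
    have hx0 : ∀ l, 0 ≤ eval (fun i => phi P (X i)) (G l) := fun l => by
      rw [← hphi]
      exact phi_nonneg hPQM hPprop harchP (hTsub (gen_mem_inQM G l))
    have hppos := hp (fun i => phi P (X i)) hx0
    have hnegp : -p ∈ P := hsub ⟨0, hT.zero_mem, 1, isSOS_one, by ring⟩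
    have hphineg := phi_nonneg hPQM hPprop harchP hnegp
    rw [hphi, map_neg] at hphineg
    linarith

/-- Putinar's Positivstellensatz, with the Archimedean condition provided by
a ball constraint. -/
theorem putinar_ball {τ ι : Type*} [Fintype τ] [DecidableEq τ] [Fintype ι] [DecidableEq ι]
    (G : ι → MvPolynomial τ ℝ) {R : ℝ}
    (hball : InQM G (C R - ∑ i : τ, X i ^ 2)) {p : MvPolynomial τ ℝ}
    (hp : ∀ x : τ → ℝ, (∀ l, 0 ≤ eval x (G l)) → 0 < eval x p) :
    InQM G p :=
  putinar G ((isQM_inQM G).isArch_of_ball hball) hp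

end PutinarAux
namespace PutinarAux

open MvPolynomial

/-- Stone–Weierstrass: polynomial approximation of a continuous function
on a compact subset of `ℝⁿ`. -/
theorem poly_approx {n : ℕ} {s : Set (Fin n → ℝ)} (hs : IsCompact s)
    {f : (Fin n → ℝ) → ℝ} (hf : Continuous f) {ε : ℝ} (hε : 0 < ε) :
    ∃ V : MvPolynomial (Fin n) ℝ, ∀ x ∈ s, |MvPolynomial.eval x V - f x| ≤ ε := by
  rcases s.eq_empty_or_nonempty with rfl | hne
  · exact ⟨0, fun x hx => absurd hx (Set.notMem_empty x)⟩
  have : CompactSpace ↥s := isCompact_iff_compactSpace.mp hs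
  set coords : Fin n → C(↥s, ℝ) :=
    fun i => ⟨fun z => (z : Fin n → ℝ) i, (continuous_apply i).comp continuous_subtype_val⟩
    with hcoords
  set Φ : MvPolynomial (Fin n) ℝ →ₐ[ℝ] C(↥s, ℝ) := MvPolynomial.aeval coords with hΦ
  set A : Subalgebra ℝ C(↥s, ℝ) := Φ.range with hA
  have hsep : A.SeparatesPoints := by
    intro z w hzw
    have hvals : ∃ i, (z : Fin n → ℝ) i ≠ (w : Fin n → ℝ) i := by
      rw [← Function.ne_iff]
      exact fun hval => hzw (Subtype.ext hval)
    obtain ⟨i, hi⟩ := hvals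
    refine ⟨coords i, ⟨coords i, ?_, rfl⟩, hi⟩
    exact (AlgHom.mem_range Φ).mpr ⟨X i, by rw [hΦ, MvPolynomial.aeval_X]⟩
  obtain ⟨g, hg⟩ :=
    ContinuousMap.exists_mem_subalgebra_near_continuous_of_separatesPoints A hsep
      (fun z : ↥s => f (z : Fin n → ℝ)) (hf.comp continuous_subtype_val) ε hε
  obtain ⟨V, hV⟩ := (AlgHom.mem_range Φ).mp g.2
  refine ⟨V, fun x hx => ?_⟩
  have hx' := hg ⟨x, hx⟩
  rw [← hV] at hx'
  have happ : (Φ V) ⟨x, hx⟩ = MvPolynomial.eval x V := by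
    have hcomp := congrArg (fun (ψ : MvPolynomial (Fin n) ℝ →ₐ[ℝ] ℝ) => ψ V)
      (MvPolynomial.comp_aeval coords (ContinuousMap.evalAlgHom ℝ ℝ (⟨x, hx⟩ : ↥s)))
    simp only [AlgHom.comp_apply] at hcomp
    rw [hΦ]
    calc (MvPolynomial.aeval coords V) ⟨x, hx⟩
        = ContinuousMap.evalAlgHom ℝ ℝ (⟨x, hx⟩ : ↥s) (MvPolynomial.aeval coords V) := rfl
      _ = MvPolynomial.aeval (fun i => coords i ⟨x, hx⟩) V := hcomp
      _ = MvPolynomial.eval x V := by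
          have h1 : (fun i => coords i (⟨x, hx⟩ : ↥s)) = x := rfl
          rw [h1]
          exact congrArg (fun (ψ : MvPolynomial (Fin n) ℝ →+* ℝ) => ψ V)
            (MvPolynomial.coe_aeval_eq_eval x)
  rw [happ] at hx'
  rw [Real.norm_eq_abs] at hx'
  exact hx'.le

end PutinarAux
namespace PutinarAux

open MvPolynomial MeasureTheory

lemma eval_aeval' {n m : ℕ} (F : Fin n → MvPolynomial (Fin n ⊕ Fin m) ℝ)
    (v : MvPolynomial (Fin n) ℝ) (y : Fin n ⊕ Fin m → ℝ) :
    eval y (aeval F v) = eval (fun i => eval y (F i)) v := by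
  induction v using MvPolynomial.induction_on with
  | C r => simp [algebraMap_eq]
  | add p q hp hq => rw [map_add, map_add, map_add, hp, hq]
  | mul_X p i hp => rw [map_mul, aeval_X, map_mul, hp, map_mul, eval_X]

lemma sum_elim_comp (nn mm : ℕ) (y : Fin nn ⊕ Fin mm → ℝ) :
    Sum.elim (y ∘ Sum.inl) (y ∘ Sum.inr) = y := by
  funext v
  cases v <;> rfl

end PutinarAux

section SemiSetFacts

open MvPolynomial MeasureTheory PutinarAux

variable {n nX : ℕ} {g : Fin nX → MvPolynomial (Fin n) ℝ}

lemma semiSet_closed (g : Fin nX → MvPolynomial (Fin n) ℝ) : IsClosed (semiSet g) := by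
  have : semiSet g = ⋂ i, {x : Fin n → ℝ | 0 ≤ eval x (g i)} := by
    ext x; simp [semiSet]
  rw [this]
  exact isClosed_iInter fun i =>
    isClosed_le continuous_const (MvPolynomial.continuous_eval _)

lemma semiSet_subset_ball {RX : ℝ} (hRX : 0 < RX)
    (hgball : ∃ i, g i = MvPolynomial.C (RX ^ 2) - ∑ j : Fin n, (MvPolynomial.X j) ^ 2) :
    semiSet g ⊆ Metric.closedBall (0 : Fin n → ℝ) RX := by
  obtain ⟨i0, hi0⟩ := hgball
  intro x hx
  have h0 := hx i0
  rw [hi0] at h0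
  have heval : eval x (MvPolynomial.C (RX ^ 2) - ∑ j : Fin n, (MvPolynomial.X j) ^ 2)
      = RX ^ 2 - ∑ j : Fin n, (x j) ^ 2 := by
    simp
  rw [heval] at h0
  have hsum : ∀ j, (x j) ^ 2 ≤ RX ^ 2 := by
    intro j
    have h1 : (x j)^2 ≤ ∑ j' : Fin n, (x j') ^ 2 :=
      Finset.single_le_sum (fun j' _ => sq_nonneg (x j')) (Finset.mem_univ j)
    linarith
  rw [Metric.mem_closedBall, dist_zero_right]
  rw [pi_norm_le_iff_of_nonneg hRX.le]
  intro j
  rw [Real.norm_eq_abs]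
  nlinarith [hsum j, abs_nonneg (x j), sq_abs (x j)]

lemma semiSet_compact {RX : ℝ} (hRX : 0 < RX)
    (hgball : ∃ i, g i = MvPolynomial.C (RX ^ 2) - ∑ j : Fin n, (MvPolynomial.X j) ^ 2) :
    IsCompact (semiSet g) := by
  apply Metric.isCompact_of_isClosed_isBounded (semiSet_closed g)
  exact Metric.isBounded_closedBall.subset (semiSet_subset_ball hRX hgball)

lemma semiSet_integrableOn {RX : ℝ} (hRX : 0 < RX)
    (hgball : ∃ i, g i = MvPolynomial.C (RX ^ 2) - ∑ j : Fin n, (MvPolynomial.X j) ^ 2)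
    {w : (Fin n → ℝ) → ℝ} (hw : Continuous w) :
    IntegrableOn w (semiSet g) volume :=
  hw.continuousOn.integrableOn_compact (semiSet_compact hRX hgball)

end SemiSetFacts
section MainAux

open MvPolynomial MeasureTheory PutinarAux

variable {n m nX nU : ℕ} {g : Fin nX → MvPolynomial (Fin n) ℝ}
  {h : Fin nU → MvPolynomial (Fin m) ℝ} {F : Fin n → MvPolynomial (Fin n ⊕ Fin m) ℝ}
  {α : ℝ}

/-- The combined generator family on `X × U`. -/
noncomputable def combGen (g : Fin nX → MvPolynomial (Fin n) ℝ)
    (h : Fin nU → MvPolynomial (Fin m) ℝ) :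
    Fin nX ⊕ Fin nU → MvPolynomial (Fin n ⊕ Fin m) ℝ :=
  Sum.elim (fun i => rename Sum.inl (g i)) (fun j => rename Sum.inr (h j))

lemma kfeas_zero_one (k : ℕ) : KFeasD g h F α k 0 1 := by
  refine ⟨by simp, by simp, 0, (fun _ => 0), (fun _ => 0), 0, (fun _ => 0), 1, (fun _ => 0),
    isSOS_zero, fun _ => isSOS_zero, fun _ => isSOS_zero, isSOS_zero, fun _ => isSOS_zero,
    isSOS_one, fun _ => isSOS_zero, ?_, ?_, ?_, ?_, ?_, ?_, ?_, ?_, ?_, ?_⟩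
  all_goals simp

lemma kfeas_step {k : ℕ} {v w : MvPolynomial (Fin n) ℝ} (hk : KFeasD g h F α k v w) :
    KFeasD g h F α (k+1) v w := by
  obtain ⟨hv, hw, q0, q, r, p0, p, s0, s, hq0, hq, hr, hp0, hp, hs0, hs,
    hd1, hd2, hd3, hd4, hd5, hd6, hd7, he1, he2, he3⟩ := hk
  have hmul : 2 * k * max 1 (Finset.univ.sup fun i => (F i).totalDegree)
      ≤ 2 * (k+1) * max 1 (Finset.univ.sup fun i => (F i).totalDegree) :=
    Nat.mul_le_mul_right _ (by omega)
  exact ⟨by omega, by omega, q0, q, r, p0, p, s0, s, hq0, hq, hr, hp0, hp, hs0, hs,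
    le_trans hd1 hmul, fun i => le_trans (hd2 i) hmul, fun j => le_trans (hd3 j) hmul,
    by omega, fun i => le_trans (hd5 i) (by omega), by omega,
    fun i => le_trans (hd7 i) (by omega), he1, he2, he3⟩

lemma kfeas_w_inQM {k : ℕ} {v w : MvPolynomial (Fin n) ℝ} (hk : KFeasD g h F α k v w) :
    InQM g w := by
  obtain ⟨_, _, q0, q, r, p0, p, s0, s, hq0, hq, hr, hp0, hp, hs0, hs,
    _, _, _, _, _, _, _, _, _, he3⟩ := hk
  exact ⟨s0, s, hs0, hs, he3⟩

lemma kfeas_wv_inQM {k : ℕ} {v w : MvPolynomial (Fin n) ℝ} (hk : KFeasD g h F α k v w) :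
    InQM g (w - v - 1) := by
  obtain ⟨_, _, q0, q, r, p0, p, s0, s, hq0, hq, hr, hp0, hp, hs0, hs,
    _, _, _, _, _, _, _, _, he2, _⟩ := hk
  exact ⟨p0, p, hp0, hp, he2⟩

lemma combGen_eval_nonneg {x : Fin n → ℝ} {u : Fin m → ℝ}
    (hx : x ∈ semiSet g) (hu : u ∈ semiSet h) (l : Fin nX ⊕ Fin nU) :
    0 ≤ eval (Sum.elim x u) (combGen g h l) := by
  cases l with
  | inl i =>
    rw [combGen, Sum.elim_inl, eval_rename, Sum.elim_comp_inl]
    exact hx i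
  | inr j =>
    rw [combGen, Sum.elim_inr, eval_rename, Sum.elim_comp_inr]
    exact hu j

lemma kfeas_v_ineq {k : ℕ} {v w : MvPolynomial (Fin n) ℝ} (hk : KFeasD g h F α k v w)
    {x : Fin n → ℝ} {u : Fin m → ℝ} (hx : x ∈ semiSet g) (hu : u ∈ semiSet h) :
    α * eval (polyMapEval F x u) v ≤ eval x v := by
  obtain ⟨_, _, q0, q, r, p0, p, s0, s, hq0, hq, hr, hp0, hp, hs0, hs,
    _, _, _, _, _, _, _, he1, _, _⟩ := hk
  have hrep : InQM (combGen g h) (rename Sum.inl v - C α * aeval F v) := by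
    refine ⟨q0, Sum.elim q r, hq0, ?_, ?_⟩
    · intro l; cases l with
      | inl i => exact hq i
      | inr j => exact hr j
    · rw [he1, Fintype.sum_sum_type]
      simp only [Sum.elim_inl, Sum.elim_inr, combGen]
      ring
  have hnn := inQM_eval_nonneg hrep (combGen_eval_nonneg hx hu)
  rw [map_sub, map_mul, eval_C, eval_rename, Sum.elim_comp_inl,
    eval_aeval' F v (Sum.elim x u)] at hnn
  have hpm : (fun i => eval (Sum.elim x u) (F i)) = polyMapEval F x u := rfl
  rw [hpm] at hnn
  linarith

lemma kfeas_dualFeas (hk : ∃ k v' w', KFeasD g h F α k v' w' ∧ True) : True := trivial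

lemma kfeas_to_dualFeas {k : ℕ} {v w : MvPolynomial (Fin n) ℝ}
    (hk : KFeasD g h F α k v w) :
    DualFeasD g h F α (fun x => eval x v) (fun x => eval x w) := by
  refine ⟨MvPolynomial.continuous_eval v, MvPolynomial.continuous_eval w, ?_, ?_, ?_⟩
  · intro x hx u hu
    exact kfeas_v_ineq hk hx hu
  · intro x hx
    have := inQM_eval_nonneg (kfeas_wv_inQM hk) (fun i => hx i)
    rw [map_sub, map_sub, map_one] at this
    linarith
  · intro x hx
    exact inQM_eval_nonneg (kfeas_w_inQM hk) (fun i => hx i)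

end MainAux
section MainApprox

open MvPolynomial MeasureTheory PutinarAux

variable {n m nX nU : ℕ} {g : Fin nX → MvPolynomial (Fin n) ℝ}
  {h : Fin nU → MvPolynomial (Fin m) ℝ} {F : Fin n → MvPolynomial (Fin n ⊕ Fin m) ℝ}
  {α RX RU : ℝ}

lemma comb_ball (hgball : ∃ i, g i = MvPolynomial.C (RX ^ 2) - ∑ j : Fin n, (MvPolynomial.X j) ^ 2)
    (hhball : ∃ j, h j = MvPolynomial.C (RU ^ 2) - ∑ i : Fin m, (MvPolynomial.X i) ^ 2) :
    InQM (combGen g h)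
      (C (RX^2 + RU^2) - ∑ vv : Fin n ⊕ Fin m, (X vv : MvPolynomial (Fin n ⊕ Fin m) ℝ) ^ 2) := by
  obtain ⟨i0, hi0⟩ := hgball
  obtain ⟨j0, hj0⟩ := hhball
  have hmem := (isQM_inQM (combGen g h)).add_mem
    (gen_mem_inQM (combGen g h) (Sum.inl i0)) (gen_mem_inQM (combGen g h) (Sum.inr j0))
  have heq : combGen g h (Sum.inl i0) + combGen g h (Sum.inr j0)
      = C (RX^2 + RU^2) - ∑ vv : Fin n ⊕ Fin m, (X vv : MvPolynomial (Fin n ⊕ Fin m) ℝ) ^ 2 := by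
    have hsplit : (∑ vv : Fin n ⊕ Fin m, (X vv : MvPolynomial (Fin n ⊕ Fin m) ℝ) ^ 2)
        = ∑ j : Fin n, (X (Sum.inl j) : MvPolynomial (Fin n ⊕ Fin m) ℝ)^2
          + ∑ i : Fin m, (X (Sum.inr i) : MvPolynomial (Fin n ⊕ Fin m) ℝ)^2 :=
      Fintype.sum_sum_type _
    rw [combGen, Sum.elim_inl, Sum.elim_inr, hi0, hj0]
    simp only [map_sub, rename_C, map_sum, map_pow, rename_X]
    rw [hsplit, map_add, map_pow C RX 2, map_pow C RU 2]
    ring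
  rwa [heq] at hmem

lemma approx_kfeas
    (hα0 : 0 < α) (hα1 : α < 1) (hRX : 0 < RX) (hRU : 0 < RU)
    (hgball : ∃ i, g i = MvPolynomial.C (RX ^ 2) - ∑ j : Fin n, (MvPolynomial.X j) ^ 2)
    (hhball : ∃ j, h j = MvPolynomial.C (RU ^ 2) - ∑ i : Fin m, (MvPolynomial.X i) ^ 2)
    {v w : (Fin n → ℝ) → ℝ} (hfeas : DualFeasD g h F α v w)
    {η : ℝ} (hη : 0 < η) :
    ∃ k V W, KFeasD g h F α k V W ∧
      ∀ x ∈ semiSet g, MvPolynomial.eval x W ≤ w x + 3*η := by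
  classical
  obtain ⟨hvc, hwc, h1, h2, h3⟩ := hfeas
  set K2 := Metric.closedBall (0 : Fin n → ℝ) RX with hK2def
  set KU := Metric.closedBall (0 : Fin m → ℝ) RU with hKUdef
  have hK2 : IsCompact K2 := isCompact_closedBall _ _
  have hKU : IsCompact KU := isCompact_closedBall _ _
  have hpolycont : Continuous (fun p : (Fin n → ℝ) × (Fin m → ℝ) => polyMapEval F p.1 p.2) := by
    apply continuous_pi
    intro i
    have hse : Continuous (fun p : (Fin n → ℝ) × (Fin m → ℝ) => Sum.elim p.1 p.2) := by
      apply continuous_pi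
      intro vv
      cases vv with
      | inl a => exact (continuous_apply a).comp continuous_fst
      | inr b => exact (continuous_apply b).comp continuous_snd
    exact (MvPolynomial.continuous_eval (F i)).comp hse
  set Him := (fun p : (Fin n → ℝ) × (Fin m → ℝ) => polyMapEval F p.1 p.2) '' (K2 ×ˢ KU)
    with hHimdef
  have hHim : IsCompact Him := (hK2.prod hKU).image hpolycont
  set Ω := K2 ∪ Him with hΩdef
  have hΩ : IsCompact Ω := hK2.union hHim
  set η₂ := (1-α)*η/4 with hη₂def
  have hη₂pos : 0 < η₂ := by
    rw [hη₂def]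
    have : (0:ℝ) < 1 - α := by linarith
    positivity
  obtain ⟨V, hV0⟩ := poly_approx hΩ (hvc.add continuous_const : Continuous (fun x => v x + η)) hη₂pos
  obtain ⟨W, hW0⟩ := poly_approx hΩ (hwc.add continuous_const : Continuous (fun x => w x + 2*η)) hη₂pos
  have hV : ∀ x ∈ Ω, |MvPolynomial.eval x V - (v x + η)| ≤ η₂ := fun x hx => by
    simpa using hV0 x hx
  have hW : ∀ x ∈ Ω, |MvPolynomial.eval x W - (w x + 2*η)| ≤ η₂ := fun x hx => by
    simpa using hW0 x hx
  have hXΩ : semiSet g ⊆ Ω :=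
    subset_trans (semiSet_subset_ball hRX hgball) Set.subset_union_left
  have hfΩ : ∀ x ∈ semiSet g, ∀ u ∈ semiSet h, polyMapEval F x u ∈ Ω := by
    intro x hx u hu
    apply Set.subset_union_right
    exact ⟨(x, u), Set.mk_mem_prod (semiSet_subset_ball hRX hgball hx)
      (semiSet_subset_ball hRU hhball hu), rfl⟩
  -- strict positivity facts
  have hcoef : α*(η+η₂) + η₂ < η := by
    rw [hη₂def]
    nlinarith [mul_pos (mul_pos (sub_pos.2 hα1) (by linarith : (0:ℝ) < 3 - α)) hη]
  have pos1 : ∀ y : Fin n ⊕ Fin m → ℝ, (∀ l, 0 ≤ eval y (combGen g h l)) →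
      0 < eval y (rename Sum.inl V - C α * aeval F V) := by
    intro y hy
    have hx : (y ∘ Sum.inl) ∈ semiSet g := by
      intro i
      have := hy (Sum.inl i)
      rwa [combGen, Sum.elim_inl, eval_rename] at this
    have hu : (y ∘ Sum.inr) ∈ semiSet h := by
      intro j
      have := hy (Sum.inr j)
      rwa [combGen, Sum.elim_inr, eval_rename] at this
    have hyx : Sum.elim (y ∘ Sum.inl) (y ∘ Sum.inr) = y := sum_elim_comp n m y
    have hevalP : eval y (rename Sum.inl V - C α * aeval F V)
        = eval (y ∘ Sum.inl) V - α * eval (polyMapEval F (y ∘ Sum.inl) (y ∘ Sum.inr)) V := by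
      rw [map_sub, map_mul, eval_C, eval_rename, eval_aeval' F V y]
      have : (fun i => eval y (F i)) = polyMapEval F (y ∘ Sum.inl) (y ∘ Sum.inr) := by
        funext i
        rw [polyMapEval, hyx]
      rw [this]
    rw [hevalP]
    have hVx := hV (y ∘ Sum.inl) (hXΩ hx)
    have hVf := hV _ (hfΩ _ hx _ hu)
    rw [abs_le] at hVx hVf
    have h1' := h1 _ hx _ hu
    have hmul : α * eval (polyMapEval F (y ∘ Sum.inl) (y ∘ Sum.inr)) V
        ≤ α * (v (polyMapEval F (y ∘ Sum.inl) (y ∘ Sum.inr)) + η + η₂) := by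
      apply mul_le_mul_of_nonneg_left _ hα0.le
      linarith [hVf.2]
    have hexp : α * (v (polyMapEval F (y ∘ Sum.inl) (y ∘ Sum.inr)) + η + η₂)
        = α * v (polyMapEval F (y ∘ Sum.inl) (y ∘ Sum.inr)) + α * (η + η₂) := by ring
    linarith [hVx.1, hmul, hexp, h1', hcoef]
  have pos2 : ∀ x : Fin n → ℝ, (∀ i, 0 ≤ eval x (g i)) →
      0 < eval x (W - V - 1) := by
    intro x hx
    have hVx := hV x (hXΩ hx)
    have hWx := hW x (hXΩ hx)
    rw [abs_le] at hVx hWx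
    have h2' := h2 x hx
    rw [map_sub, map_sub, map_one]
    have hη₂η : η₂ < η/2 := by
      rw [hη₂def]
      nlinarith [hα0, hη]
    linarith [hVx.2, hWx.1]
  have pos3 : ∀ x : Fin n → ℝ, (∀ i, 0 ≤ eval x (g i)) → 0 < eval x W := by
    intro x hx
    have hWx := hW x (hXΩ hx)
    rw [abs_le] at hWx
    have h3' := h3 x hx
    have hη₂η : η₂ < η/2 := by
      rw [hη₂def]
      nlinarith [hα0, hη]
    linarith [hWx.1]
  -- Putinar certificates
  have hballg : InQM g (C (RX^2) - ∑ j : Fin n, (X j : MvPolynomial (Fin n) ℝ)^2) := by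
    obtain ⟨i0, hi0⟩ := hgball
    have := gen_mem_inQM g i0
    rwa [hi0] at this
  obtain ⟨q0, qc, hq0, hqc, heqA⟩ :=
    putinar_ball (combGen g h) (comb_ball hgball hhball) pos1
  obtain ⟨p0, pc, hp0, hpc, heqB⟩ := putinar_ball g hballg pos2
  obtain ⟨s0, sc, hs0, hsc, heqC⟩ := putinar_ball g hballg pos3
  -- assemble
  set M := max 1 (Finset.univ.sup fun i => (F i).totalDegree) with hMdef
  set Dsum : ℕ := V.totalDegree + W.totalDegree + q0.totalDegree + p0.totalDegree
      + s0.totalDegree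
      + (∑ i : Fin nX, (qc (Sum.inl i) * rename Sum.inl (g i)).totalDegree)
      + (∑ j : Fin nU, (qc (Sum.inr j) * rename Sum.inr (h j)).totalDegree)
      + (∑ i : Fin nX, (pc i * g i).totalDegree)
      + (∑ i : Fin nX, (sc i * g i).totalDegree) with hDdef
  have hM1 : 1 ≤ M := le_max_left _ _
  have h2D : ∀ x : ℕ, x ≤ Dsum → x ≤ 2 * Dsum := fun x hx => by omega
  have hbig : ∀ x : ℕ, x ≤ Dsum → x ≤ 2 * Dsum * M := by
    intro x hx
    calc x ≤ 2 * Dsum := h2D x hx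
      _ = 2 * Dsum * 1 := by ring
      _ ≤ 2 * Dsum * M := Nat.mul_le_mul_left _ hM1
  refine ⟨Dsum, V, W, ⟨?_, ?_, q0, (fun i => qc (Sum.inl i)), (fun j => qc (Sum.inr j)),
    p0, pc, s0, sc, hq0, (fun i => hqc _), (fun j => hqc _), hp0, hpc, hs0, hsc,
    ?_, ?_, ?_, ?_, ?_, ?_, ?_, ?_, ?_, ?_⟩, ?_⟩
  · exact h2D _ (by rw [hDdef]; omega)
  · exact h2D _ (by rw [hDdef]; omega)
  · exact hbig _ (by rw [hDdef]; omega)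
  · intro i
    show (qc (Sum.inl i) * rename Sum.inl (g i)).totalDegree
      ≤ 2 * Dsum * max 1 (Finset.univ.sup fun i => (F i).totalDegree)
    apply hbig
    have hle : (qc (Sum.inl i) * rename Sum.inl (g i)).totalDegree
        ≤ ∑ i : Fin nX, (qc (Sum.inl i) * rename Sum.inl (g i)).totalDegree :=
      Finset.single_le_sum
        (f := fun i : Fin nX => (qc (Sum.inl i) * rename Sum.inl (g i)).totalDegree)
        (fun _ _ => Nat.zero_le _) (Finset.mem_univ i)
    rw [hDdef]; omega
  · intro j
    show (qc (Sum.inr j) * rename Sum.inr (h j)).totalDegree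
      ≤ 2 * Dsum * max 1 (Finset.univ.sup fun i => (F i).totalDegree)
    apply hbig
    have hle : (qc (Sum.inr j) * rename Sum.inr (h j)).totalDegree
        ≤ ∑ j : Fin nU, (qc (Sum.inr j) * rename Sum.inr (h j)).totalDegree :=
      Finset.single_le_sum
        (f := fun j : Fin nU => (qc (Sum.inr j) * rename Sum.inr (h j)).totalDegree)
        (fun _ _ => Nat.zero_le _) (Finset.mem_univ j)
    rw [hDdef]; omega
  · exact h2D _ (by rw [hDdef]; omega)
  · intro i
    show (pc i * g i).totalDegree ≤ 2 * Dsum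
    apply h2D
    have hle : (pc i * g i).totalDegree ≤ ∑ i : Fin nX, (pc i * g i).totalDegree :=
      Finset.single_le_sum (f := fun i : Fin nX => (pc i * g i).totalDegree)
        (fun _ _ => Nat.zero_le _) (Finset.mem_univ i)
    rw [hDdef]; omega
  · exact h2D _ (by rw [hDdef]; omega)
  · intro i
    show (sc i * g i).totalDegree ≤ 2 * Dsum
    apply h2D
    have hle : (sc i * g i).totalDegree ≤ ∑ i : Fin nX, (sc i * g i).totalDegree :=
      Finset.single_le_sum (f := fun i : Fin nX => (sc i * g i).totalDegree)
        (fun _ _ => Nat.zero_le _) (Finset.mem_univ i)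
    rw [hDdef]; omega
  · rw [heqA, Fintype.sum_sum_type]
    simp only [combGen, Sum.elim_inl, Sum.elim_inr]
    rw [← add_assoc]
  · exact heqB
  · exact heqC
  · intro x hx
    have hWx := hW x (hXΩ hx)
    rw [abs_le] at hWx
    have hη₂η : η₂ ≤ η := by
      rw [hη₂def]
      nlinarith [hα0, hη]
    linarith [hWx.2]

end MainApprox
/-- The discrete-time dual SOS values converge monotonically from above to the
optimal value of the discrete-time dual LP. -/
theorem sos_hierarchy_converges_discrete {n m nX nU : ℕ}
    (g : Fin nX → MvPolynomial (Fin n) ℝ) (h : Fin nU → MvPolynomial (Fin m) ℝ)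
    (F : Fin n → MvPolynomial (Fin n ⊕ Fin m) ℝ)
    (α : ℝ) (hα0 : 0 < α) (hα1 : α < 1)
    (RX RU : ℝ) (hRX : 0 < RX) (hRU : 0 < RU)
    -- Assumption 1: one of the gᵢ (resp. hⱼ) is the ball constraint R² − ‖·‖²
    (hgball : ∃ i, g i = MvPolynomial.C (RX ^ 2) - ∑ j : Fin n, (MvPolynomial.X j) ^ 2)
    (hhball : ∃ j, h j = MvPolynomial.C (RU ^ 2) - ∑ i : Fin m, (MvPolynomial.X i) ^ 2) :
    (∀ k, sosValD g h F α (k + 1) ≤ sosValD g h F α k) ∧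
    (∀ k, dualValD g h F α ≤ sosValD g h F α k) ∧
    Filter.Tendsto (fun k => sosValD g h F α k) Filter.atTop (nhds (dualValD g h F α)) := by
  classical
  open MvPolynomial MeasureTheory PutinarAux in
  have hXmeas : MeasurableSet (semiSet g) := (semiSet_closed g).measurableSet
  set SK : ℕ → Set ℝ := fun k => {r : ℝ | ∃ v w, KFeasD g h F α k v w ∧
    r = ∫ x in semiSet g, MvPolynomial.eval x w ∂volume} with hSKdef
  set SLP : Set ℝ := {r : ℝ | ∃ v w, DualFeasD g h F α v w ∧
    r = ∫ x in semiSet g, w x ∂volume} with hSLPdef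
  have hsosval : ∀ k, sosValD g h F α k = sInf (SK k) := fun k => rfl
  have hdualval : dualValD g h F α = sInf SLP := rfl
  have hSKne : ∀ k, (SK k).Nonempty := fun k =>
    ⟨∫ x in semiSet g, MvPolynomial.eval x (1 : MvPolynomial (Fin n) ℝ) ∂volume,
      0, 1, kfeas_zero_one k, rfl⟩
  have hSK0 : ∀ k, ∀ r ∈ SK k, (0:ℝ) ≤ r := by
    rintro k r ⟨v, w, hk, rfl⟩
    apply MeasureTheory.setIntegral_nonneg hXmeas
    intro x hx
    exact PutinarAux.inQM_eval_nonneg (kfeas_w_inQM hk) (fun i => hx i)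
  have hSKbdd : ∀ k, BddBelow (SK k) := fun k => ⟨0, fun r hr => hSK0 k r hr⟩
  have hSKsub : ∀ k, SK k ⊆ SK (k+1) := by
    rintro k r ⟨v, w, hk, rfl⟩
    exact ⟨v, w, kfeas_step hk, rfl⟩
  have hLP0 : ∀ r ∈ SLP, (0:ℝ) ≤ r := by
    rintro r ⟨v, w, hfeas, rfl⟩
    exact MeasureTheory.setIntegral_nonneg hXmeas (fun x hx => hfeas.2.2.2.2 x hx)
  have hLPbdd : BddBelow SLP := ⟨0, fun r hr => hLP0 r hr⟩
  have hLPne : SLP.Nonempty := by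
    refine ⟨∫ x in semiSet g, (1:ℝ) ∂volume, (fun _ => 0), (fun _ => 1), ?_, rfl⟩
    refine ⟨continuous_const, continuous_const, ?_, ?_, ?_⟩
    · intro x _ u _; simp
    · intro x _; norm_num
    · intro x _; norm_num
  have part1 : ∀ k, sosValD g h F α (k + 1) ≤ sosValD g h F α k := by
    intro k
    rw [hsosval, hsosval]
    exact csInf_le_csInf (hSKbdd (k+1)) (hSKne k) (hSKsub k)
  have part2 : ∀ k, dualValD g h F α ≤ sosValD g h F α k := by
    intro k
    rw [hsosval, hdualval]
    apply le_csInf (hSKne k)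
    rintro r ⟨v, w, hk, rfl⟩
    exact csInf_le hLPbdd ⟨(fun x => MvPolynomial.eval x v), (fun x => MvPolynomial.eval x w),
      kfeas_to_dualFeas hk, rfl⟩
  refine ⟨part1, part2, ?_⟩
  have hant : Antitone (fun k => sosValD g h F α k) :=
    antitone_nat_of_succ_le part1
  have hbddr : BddBelow (Set.range (fun k => sosValD g h F α k)) := by
    refine ⟨dualValD g h F α, ?_⟩
    rintro x ⟨k, rfl⟩
    exact part2 k
  have htend := tendsto_atTop_ciInf hant hbddr
  have heq : (⨅ k, sosValD g h F α k) = dualValD g h F α := by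
    apply le_antisymm
    · apply le_of_forall_pos_le_add
      intro ε hε
      have hlt : sInf SLP < sInf SLP + ε/2 := by linarith
      obtain ⟨r, hrS, hrlt⟩ := exists_lt_of_csInf_lt hLPne hlt
      obtain ⟨v, w, hfeas, rfl⟩ := hrS
      set Vol : ℝ := (volume (semiSet g)).toReal with hVoldef
      have hVol0 : 0 ≤ Vol := ENNReal.toReal_nonneg
      have hden : (0:ℝ) < 3 * Vol + 1 := by linarith
      set η : ℝ := ε / (2 * (3 * Vol + 1)) with hηdef
      have hηpos : 0 < η := by positivity
      obtain ⟨k, V, W, hkf, hWb⟩ :=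
        approx_kfeas (g := g) (h := h) (F := F) hα0 hα1 hRX hRU hgball hhball
          hfeas hηpos
      have hwc : Continuous w := hfeas.2.1
      have hintW : MeasureTheory.IntegrableOn (fun x => MvPolynomial.eval x W)
          (semiSet g) volume :=
        semiSet_integrableOn hRX hgball (MvPolynomial.continuous_eval W)
      have hintw : MeasureTheory.IntegrableOn w (semiSet g) volume :=
        semiSet_integrableOn hRX hgball hwc
      have hintw3 : MeasureTheory.IntegrableOn (fun x => w x + 3*η) (semiSet g) volume :=
        semiSet_integrableOn hRX hgball (hwc.add continuous_const)
      have hmono := MeasureTheory.setIntegral_mono_on hintW hintw3 hXmeas hWb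
      have hsplit : (∫ x in semiSet g, (w x + 3*η) ∂volume)
          = (∫ x in semiSet g, w x ∂volume) + 3*η*Vol := by
        rw [MeasureTheory.integral_add hintw (MeasureTheory.integrableOn_const
          ((semiSet_compact hRX hgball).measure_lt_top.ne))]
        rw [MeasureTheory.setIntegral_const, smul_eq_mul, hVoldef, MeasureTheory.measureReal_def]
        ring
      have h3η : 3*η*Vol ≤ ε/2 := by
        rw [hηdef]
        rw [show 3 * (ε / (2*(3*Vol+1))) * Vol = (ε * (3*Vol)) / (2*(3*Vol+1)) from by ring]
        rw [div_le_div_iff₀ (by positivity) (by norm_num : (0:ℝ) < 2)]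
        nlinarith [hε.le, hVol0]
      have hdk : sosValD g h F α k ≤ (∫ x in semiSet g, w x ∂volume) + 3*η*Vol := by
        rw [hsosval]
        refine le_trans (csInf_le (hSKbdd k) ⟨V, W, hkf, rfl⟩) ?_
        rw [← hsplit]
        exact hmono
      have hik : (⨅ k', sosValD g h F α k') ≤ sosValD g h F α k := ciInf_le hbddr k
      rw [hdualval]
      linarith
    · exact le_ciInf part2
  rw [← heq]
  exact htend
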